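/- arXiv:2008.06677 — 4 statements merged into one kernel-verified Lean document; each statement's English description precedes it below -/
import Mathlib

section
/- Let n, m ≥ 1, let ξ ∈ ℝⁿ, let Ω ∈ ℝ^{n×n} be positive definite with decomposition Ω = D_Ω Ω̄ D_Ω, and let W ∈ ℝ^{m×n}. Then for every f ∈ ℝⁿ, Φ_m(W f) · φ_n(f − ξ; Ω) = Φ_m(W ξ; W Ω Wᵀ + I_m) · sun(f), where sun is the unified skew-normal SUN_{n,m}(ξ, Ω, Ω̄ D_Ω Wᵀ, W ξ, W Ω Wᵀ + I_m) density. In particular, the function f ↦ Φ_m(W f) · φ_n(f − ξ; Ω) / Φ_m(W ξ; W Ω Wᵀ + I_m) is exactly the SUN_{n,m}(ξ, Ω, Ω̄ D_Ω Wᵀ, W ξ, W Ω Wᵀ + I_m) density; i.e., a multivariate normal prior N(ξ, Ω) is conjugate to the affine probit likelihood f ↦ Φ_m(W f). -/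
open MeasureTheory Real Matrix

/-- Centered multivariate normal density with covariance `S`. -/
noncomputable def gaussPdf {ι : Type*} [Fintype ι] [DecidableEq ι]
    (S : Matrix ι ι ℝ) (x : ι → ℝ) : ℝ :=
  (2 * π) ^ (-(Fintype.card ι : ℝ) / 2) * S.det ^ (-(1 : ℝ) / 2) *
    Real.exp (-(1 / 2) * (x ⬝ᵥ S⁻¹.mulVec x))

/-- Centered multivariate normal CDF with covariance `S`, evaluated at `a`. -/
noncomputable def gaussCdf {ι : Type*} [Fintype ι] [DecidableEq ι]
    (S : Matrix ι ι ℝ) (a : ι → ℝ) : ℝ :=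
  ∫ t in {t : ι → ℝ | ∀ i, t i ≤ a i}, gaussPdf S t

/-- `D_Ω`: diagonal matrix of square roots of the diagonal of `Ω`. -/
noncomputable def matD {ι : Type*} [Fintype ι] [DecidableEq ι]
    (Ω : Matrix ι ι ℝ) : Matrix ι ι ℝ :=
  Matrix.diagonal fun i => Real.sqrt (Ω i i)

/-- `Ω̄`: the correlation matrix of `Ω`, so that `Ω = D_Ω Ω̄ D_Ω`. -/
noncomputable def matCorr {ι : Type*} [Fintype ι] [DecidableEq ι]
    (Ω : Matrix ι ι ℝ) : Matrix ι ι ℝ :=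
  (matD Ω)⁻¹ * Ω * (matD Ω)⁻¹

/-- Unified skew-normal `SUN(ξ, Ω, Δ, γ, Γ)` density. -/
noncomputable def sunPdf {ι κ : Type*} [Fintype ι] [DecidableEq ι] [Fintype κ] [DecidableEq κ]
    (ξ : ι → ℝ) (Ω : Matrix ι ι ℝ) (Δ : Matrix ι κ ℝ) (γ : κ → ℝ) (Γ : Matrix κ κ ℝ)
    (z : ι → ℝ) : ℝ :=
  gaussPdf Ω (z - ξ) *
    gaussCdf (Γ - Δᵀ * (matCorr Ω)⁻¹ * Δ)
      (γ + (Δᵀ * (matCorr Ω)⁻¹ * (matD Ω)⁻¹).mulVec (z - ξ)) /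
  gaussCdf Γ γ

section Alg
variable {ι : Type*} [Fintype ι] [DecidableEq ι] {Ω : Matrix ι ι ℝ}

lemma diag_pos (hΩ : Ω.PosDef) (i : ι) : 0 < Ω i i := by
  have hne : (Pi.single i 1 : ι → ℝ) ≠ 0 := by
    intro h
    have := congrFun h i
    simp at this
  have := hΩ.dotProduct_mulVec_pos hne
  simpa [single_dotProduct, mulVec_single] using this

lemma matD_det_isUnit (hΩ : Ω.PosDef) : IsUnit (matD Ω).det := by
  rw [matD, det_diagonal]
  refine (Finset.prod_pos fun i _ => Real.sqrt_pos.mpr (diag_pos hΩ i)).ne'.isUnit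

lemma matD_mul_inv (hΩ : Ω.PosDef) : matD Ω * (matD Ω)⁻¹ = 1 :=
  mul_nonsing_inv _ (matD_det_isUnit hΩ)

lemma matD_inv_mul (hΩ : Ω.PosDef) : (matD Ω)⁻¹ * matD Ω = 1 :=
  nonsing_inv_mul _ (matD_det_isUnit hΩ)

lemma matD_corr_matD (hΩ : Ω.PosDef) : matD Ω * matCorr Ω * matD Ω = Ω := by
  simp only [matCorr, mul_assoc]
  rw [matD_inv_mul hΩ, mul_one, ← mul_assoc, matD_mul_inv hΩ, one_mul]

lemma matD_transpose : (matD Ω)ᵀ = matD Ω := by rw [matD, diagonal_transpose]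

lemma omega_transpose (hΩ : Ω.PosDef) : Ωᵀ = Ω := by
  ext i j
  have := congrFun (congrFun hΩ.1 i) j
  simpa [conjTranspose_apply] using this

lemma matCorr_transpose (hΩ : Ω.PosDef) : (matCorr Ω)ᵀ = matCorr Ω := by
  simp [matCorr, transpose_mul, transpose_nonsing_inv, matD_transpose, omega_transpose hΩ,
    Matrix.mul_assoc]

lemma matCorr_det_isUnit (hΩ : Ω.PosDef) : IsUnit (matCorr Ω).det := by
  have h : (matD Ω).det * (matCorr Ω).det * (matD Ω).det = Ω.det := by
    rw [← det_mul, ← det_mul, matD_corr_matD hΩ]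
  have hΩd : Ω.det ≠ 0 := hΩ.det_pos.ne'
  rcases eq_or_ne (matCorr Ω).det 0 with h0 | h0
  · rw [h0] at h; simp at h; exact absurd h.symm hΩd
  · exact h0.isUnit

variable {κ : Type*} [Fintype κ] [DecidableEq κ]

lemma delta_transpose (hΩ : Ω.PosDef) (W : Matrix κ ι ℝ) :
    (matCorr Ω * matD Ω * Wᵀ)ᵀ = W * matD Ω * matCorr Ω := by
  rw [transpose_mul, transpose_mul, transpose_transpose, matD_transpose, matCorr_transpose hΩ]
  simp only [Matrix.mul_assoc]

lemma key1 (hΩ : Ω.PosDef) (W : Matrix κ ι ℝ) :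
    (matCorr Ω * matD Ω * Wᵀ)ᵀ * (matCorr Ω)⁻¹ * (matCorr Ω * matD Ω * Wᵀ) = W * Ω * Wᵀ := by
  have h := matD_corr_matD hΩ
  rw [delta_transpose hΩ, mul_nonsing_inv_cancel_right _ _ (matCorr_det_isUnit hΩ)]
  conv_rhs => rw [← h]
  simp only [Matrix.mul_assoc]

lemma key2 (hΩ : Ω.PosDef) (W : Matrix κ ι ℝ) :
    (matCorr Ω * matD Ω * Wᵀ)ᵀ * (matCorr Ω)⁻¹ * (matD Ω)⁻¹ = W := by
  rw [delta_transpose hΩ, mul_nonsing_inv_cancel_right _ _ (matCorr_det_isUnit hΩ),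
    mul_nonsing_inv_cancel_right _ _ (matD_det_isUnit hΩ)]

end Alg

section Pos
variable {m : ℕ}

lemma quad_continuous (A : Matrix (Fin m) (Fin m) ℝ) :
    Continuous fun x : Fin m → ℝ => x ⬝ᵥ A.mulVec x :=
  continuous_id.dotProduct (continuous_const.matrix_mulVec continuous_id)

lemma quad_lower_bound (hm : 1 ≤ m) {A : Matrix (Fin m) (Fin m) ℝ} (hA : A.PosDef) :
    ∃ c > 0, ∀ x : Fin m → ℝ, c * ‖x‖ ^ 2 ≤ x ⬝ᵥ A.mulVec x := by
  haveI : Nonempty (Fin m) := ⟨⟨0, hm⟩⟩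
  have hne : (Metric.sphere (0 : Fin m → ℝ) 1).Nonempty :=
    NormedSpace.sphere_nonempty.mpr zero_le_one
  obtain ⟨x₀, hx₀, hmin⟩ := (isCompact_sphere (0 : Fin m → ℝ) 1).exists_isMinOn hne
    (quad_continuous A).continuousOn
  have hx₀norm : ‖x₀‖ = 1 := by simpa using hx₀
  have hx₀ne : x₀ ≠ 0 := by intro h; rw [h] at hx₀norm; simp at hx₀norm
  refine ⟨x₀ ⬝ᵥ A.mulVec x₀, by simpa using hA.dotProduct_mulVec_pos hx₀ne, fun x => ?_⟩
  rcases eq_or_ne x 0 with rfl | hx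
  · simp
  · have hr : 0 < ‖x‖ := norm_pos_iff.mpr hx
    set y : Fin m → ℝ := ‖x‖⁻¹ • x with hy
    have hymem : y ∈ Metric.sphere (0 : Fin m → ℝ) 1 := by
      simp [hy, norm_smul, abs_of_pos (inv_pos.mpr hr), inv_mul_cancel₀ hr.ne']
    have h1 : x₀ ⬝ᵥ A.mulVec x₀ ≤ y ⬝ᵥ A.mulVec y := hmin hymem
    have h2 : y ⬝ᵥ A.mulVec y = ‖x‖⁻¹ * (‖x‖⁻¹ * (x ⬝ᵥ A.mulVec x)) := by
      rw [hy, mulVec_smul, smul_dotProduct, dotProduct_smul]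
      simp [smul_eq_mul, mul_assoc]
    rw [h2] at h1
    calc (x₀ ⬝ᵥ A.mulVec x₀) * ‖x‖ ^ 2 = ‖x‖ ^ 2 * (x₀ ⬝ᵥ A.mulVec x₀) := mul_comm _ _
      _ ≤ ‖x‖ ^ 2 * (‖x‖⁻¹ * (‖x‖⁻¹ * (x ⬝ᵥ A.mulVec x))) :=
          mul_le_mul_of_nonneg_left h1 (sq_nonneg _)
      _ = x ⬝ᵥ A.mulVec x := by field_simp [pow_two]

lemma gaussPdf_pos {ι : Type*} [Fintype ι] [DecidableEq ι] {S : Matrix ι ι ℝ}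
    (hS : S.PosDef) (x : ι → ℝ) : 0 < gaussPdf S x := by
  have h2π : (0:ℝ) < 2 * π := by positivity
  exact mul_pos (mul_pos (rpow_pos_of_pos h2π _) (rpow_pos_of_pos hS.det_pos _)) (exp_pos _)

lemma gaussPdf_continuous {ι : Type*} [Fintype ι] [DecidableEq ι] (S : Matrix ι ι ℝ) :
    Continuous (gaussPdf S) := by
  apply Continuous.mul continuous_const
  exact Real.continuous_exp.comp (Continuous.mul continuous_const
    (continuous_id.dotProduct (continuous_const.matrix_mulVec continuous_id)))

lemma gaussPdf_integrable (hm : 1 ≤ m) {S : Matrix (Fin m) (Fin m) ℝ} (hS : S.PosDef) :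
    Integrable (gaussPdf S) := by
  obtain ⟨c, hc, hbound⟩ := quad_lower_bound hm hS.inv
  have hb : (0:ℝ) < c / (2 * m) := by positivity
  have hint1 : Integrable fun t : ℝ => Real.exp (-(c / (2 * m)) * t ^ 2) :=
    integrable_exp_neg_mul_sq hb
  have hInt : Integrable fun x : Fin m → ℝ => ∏ i, Real.exp (-(c / (2 * m)) * (x i) ^ 2) :=
    Integrable.fintype_prod fun _ => hint1
  set C := (2 * π) ^ (-(Fintype.card (Fin m) : ℝ) / 2) * S.det ^ (-(1:ℝ) / 2) with hC
  have hCpos : 0 < C := by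
    have h2π : (0:ℝ) < 2 * π := by positivity
    exact mul_pos (rpow_pos_of_pos h2π _) (rpow_pos_of_pos hS.det_pos _)
  apply Integrable.mono' (hInt.const_mul C)
    ((gaussPdf_continuous S).aestronglyMeasurable)
  filter_upwards with x
  have hqx : c * ‖x‖ ^ 2 ≤ x ⬝ᵥ S⁻¹.mulVec x := hbound x
  have hsum : ∑ i, (x i) ^ 2 ≤ (m : ℝ) * ‖x‖ ^ 2 := by
    calc ∑ i, (x i) ^ 2 ≤ ∑ _i : Fin m, ‖x‖ ^ 2 := by
          refine Finset.sum_le_sum fun i _ => ?_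
          have := norm_le_pi_norm x i
          calc (x i) ^ 2 = ‖x i‖ ^ 2 := by rw [Real.norm_eq_abs, sq_abs]
            _ ≤ ‖x‖ ^ 2 := by gcongr
      _ = (m : ℝ) * ‖x‖ ^ 2 := by simp [Finset.sum_const, mul_comm]
  have hexp : Real.exp (-(1 / 2) * (x ⬝ᵥ S⁻¹.mulVec x)) ≤
      ∏ i, Real.exp (-(c / (2 * m)) * (x i) ^ 2) := by
    rw [← Real.exp_sum]
    apply Real.exp_le_exp.mpr
    have hm' : (0:ℝ) < m := by exact_mod_cast hm
    have : ∑ i, -(c / (2 * m)) * (x i) ^ 2 = -(c / (2 * m)) * ∑ i, (x i) ^ 2 := by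
      rw [Finset.mul_sum]
    rw [this]
    have h1 : (c / (2 * m)) * ∑ i, (x i) ^ 2 ≤ (c / (2 * m)) * ((m:ℝ) * ‖x‖ ^ 2) := by
      apply mul_le_mul_of_nonneg_left hsum (le_of_lt hb)
    have h2 : (c / (2 * m)) * ((m:ℝ) * ‖x‖ ^ 2) = (1 / 2) * (c * ‖x‖ ^ 2) := by
      field_simp
    nlinarith [hqx]
  have : gaussPdf S x = C * Real.exp (-(1 / 2) * (x ⬝ᵥ S⁻¹.mulVec x)) := rfl
  rw [Real.norm_eq_abs, abs_of_pos (gaussPdf_pos hS x), this]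
  exact mul_le_mul_of_nonneg_left hexp (le_of_lt hCpos)

lemma gaussCdf_pos (hm : 1 ≤ m) {S : Matrix (Fin m) (Fin m) ℝ} (hS : S.PosDef)
    (a : Fin m → ℝ) : 0 < gaussCdf S a := by
  have hset : {t : Fin m → ℝ | ∀ i, t i ≤ a i} = Set.pi Set.univ fun i => Set.Iic (a i) := by
    ext t; simp [Set.mem_pi, Pi.le_def]
  rw [gaussCdf, setIntegral_pos_iff_support_of_nonneg_ae
    (Filter.Eventually.of_forall fun x => (gaussPdf_pos hS x).le)
    ((gaussPdf_integrable hm hS).integrableOn)]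
  have hsupp : Function.support (gaussPdf S) = Set.univ :=
    Set.eq_univ_iff_forall.mpr fun x => (gaussPdf_pos hS x).ne'
  rw [hsupp, Set.univ_inter, hset, volume_pi_pi]
  simp only [Real.volume_Iic, Finset.prod_const, Finset.card_univ, Fintype.card_fin]
  exact pos_iff_ne_zero.mpr (pow_ne_zero _ (by simp))

end Pos

/-- Standard univariate normal CDF `Φ₁`. -/
noncomputable def stdNormalCdf (a : ℝ) : ℝ :=
  ∫ t in Set.Iic a, (2 * π) ^ (-(1 : ℝ) / 2) * Real.exp (-(t ^ 2) / 2)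

/-- a multivariate normal prior `N(ξ, Ω)` is conjugate to the affine probit
likelihood `f ↦ Φ_m(W f)`: the product of likelihood and prior density equals the
normalizing constant `Φ_m(W ξ; W Ω Wᵀ + I_m)` times the
`SUN_{n,m}(ξ, Ω, Ω̄ D_Ω Wᵀ, W ξ, W Ω Wᵀ + I_m)` density. -/
theorem affine_probit_conjugacy (n m : ℕ) (hn : 1 ≤ n) (hm : 1 ≤ m)
    (ξ : Fin n → ℝ) (Ω : Matrix (Fin n) (Fin n) ℝ) (hΩ : Ω.PosDef)
    (W : Matrix (Fin m) (Fin n) ℝ) :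
    ∀ f : Fin n → ℝ,
      gaussCdf (1 : Matrix (Fin m) (Fin m) ℝ) (W.mulVec f) * gaussPdf Ω (f - ξ) =
        gaussCdf (W * Ω * Wᵀ + 1) (W.mulVec ξ) *
          sunPdf ξ Ω (matCorr Ω * matD Ω * Wᵀ) (W.mulVec ξ) (W * Ω * Wᵀ + 1) f := by
  intro f
  have hsemi : (W * Ω * Wᵀ).PosSemidef := by
    have := hΩ.posSemidef.mul_mul_conjTranspose_same W
    rwa [conjTranspose_eq_transpose_of_trivial] at this
  have hΓ : (W * Ω * Wᵀ + 1).PosDef := Matrix.PosDef.posSemidef_add hsemi Matrix.PosDef.one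
  have hc : gaussCdf (W * Ω * Wᵀ + 1) (W.mulVec ξ) ≠ 0 := (gaussCdf_pos hm hΓ _).ne'
  rw [sunPdf, key1 hΩ W, key2 hΩ W, add_sub_cancel_left, Matrix.mulVec_sub]
  have harg : W.mulVec ξ + (W.mulVec f - W.mulVec ξ) = W.mulVec f := by abel
  rw [harg]
  field_simp
end

section
/- Let n, m ≥ 1, let ξ ∈ ℝⁿ, let Ω ∈ ℝ^{n×n} be positive definite, and let W ∈ ℝ^{m×n}. Then the marginal likelihood of the affine probit model under a normal prior equals a single multivariate normal CDF: ∫_{ℝⁿ} Φ_m(W f) · φ_n(f − ξ; Ω) df = Φ_m(W ξ; W Ω Wᵀ + I_m). -/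
open MeasureTheory Real Matrix

set_option linter.unusedSectionVars false

variable {ι : Type*} [Fintype ι] [DecidableEq ι]

lemma mulVec_dot {κ : Type*} [Fintype κ] (M : Matrix κ ι ℝ) (x : ι → ℝ) (y : κ → ℝ) :
    (M *ᵥ x) ⬝ᵥ y = x ⬝ᵥ (Mᵀ *ᵥ y) := by
  rw [dotProduct_comm, dotProduct_mulVec, ← mulVec_transpose, dotProduct_comm]

lemma quad_comp (M A : Matrix ι ι ℝ) (y : ι → ℝ) :
    (M *ᵥ y) ⬝ᵥ (A *ᵥ (M *ᵥ y)) = y ⬝ᵥ ((Mᵀ * A * M) *ᵥ y) := by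
  rw [mulVec_dot, mulVec_mulVec, mulVec_mulVec]

lemma continuous_quad (M : Matrix ι ι ℝ) : Continuous fun x : ι → ℝ => x ⬝ᵥ (M *ᵥ x) := by
  simp only [dotProduct, mulVec]
  exact continuous_finset_sum _ fun i _ => (continuous_apply i).mul
    (continuous_finset_sum _ fun j _ => continuous_const.mul (continuous_apply j))

lemma continuous_gaussPdf (S : Matrix ι ι ℝ) : Continuous (gaussPdf S) := by
  unfold gaussPdf
  exact continuous_const.mul (Real.continuous_exp.comp (continuous_const.mul (continuous_quad _)))

lemma gaussPdf_nonneg {S : Matrix ι ι ℝ} (hS : 0 ≤ S.det) (x : ι → ℝ) : 0 ≤ gaussPdf S x := by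
  unfold gaussPdf
  have h1 : (0:ℝ) ≤ (2 * π) ^ (-(Fintype.card ι : ℝ) / 2) := Real.rpow_nonneg (by positivity) _
  have h2 : (0:ℝ) ≤ S.det ^ (-(1:ℝ)/2) := Real.rpow_nonneg hS _
  positivity
set_option linter.unusedSectionVars false

lemma measurable_toLin' (M : Matrix ι ι ℝ) : Measurable (Matrix.toLin' M) :=
  (LinearMap.continuous_on_pi _).measurable

lemma integral_comp_mulVec (f : (ι → ℝ) → ℝ) (hf : AEStronglyMeasurable f (volume : Measure (ι → ℝ)))
    {M : Matrix ι ι ℝ} (hM : M.det ≠ 0) :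
    ∫ x, f (M *ᵥ x) = |M.det|⁻¹ * ∫ x, f x := by
  have hmap := Real.map_matrix_volume_pi_eq_smul_volume_pi hM
  have h1 : ∫ x, f (M *ᵥ x) = ∫ y, f y ∂(Measure.map (Matrix.toLin' M) volume) := by
    rw [integral_map (measurable_toLin' M).aemeasurable]
    · simp [Matrix.toLin'_apply]
    · rw [hmap]
      exact hf.smul_measure _
  rw [h1, hmap, integral_smul_measure, ENNReal.toReal_ofReal (abs_nonneg _), smul_eq_mul, abs_inv]

lemma integrable_comp_mulVec {f : (ι → ℝ) → ℝ} (hf : AEStronglyMeasurable f (volume : Measure (ι → ℝ)))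
    (hi : Integrable f) {M : Matrix ι ι ℝ} (hM : M.det ≠ 0) :
    Integrable fun x => f (M *ᵥ x) := by
  have hmap := Real.map_matrix_volume_pi_eq_smul_volume_pi hM
  have : Integrable f (Measure.map (Matrix.toLin' M) volume) := by
    rw [hmap]
    exact hi.smul_measure (by simp)
  have h2 := (integrable_map_measure (by rw [hmap]; exact hf.smul_measure _)
    (measurable_toLin' M).aemeasurable).mp this
  exact h2

lemma integral_exp_neg_half_dot :
    ∫ x : ι → ℝ, Real.exp (-(1/2) * (x ⬝ᵥ x)) = (2*π) ^ ((Fintype.card ι : ℝ)/2) := by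
  have hx : ∀ x : ι → ℝ, Real.exp (-(1/2) * (x ⬝ᵥ x)) = ∏ i, Real.exp (-(1/2) * (x i)^2) := by
    intro x
    rw [← Real.exp_sum]
    congr 1
    rw [dotProduct, Finset.mul_sum]
    congr 1 with i
    ring
  simp_rw [hx]
  rw [MeasureTheory.integral_fintype_prod_volume_eq_pow (ι := ι) (fun t : ℝ => Real.exp (-(1/2) * t^2)),
    integral_gaussian]
  rw [show π / (1/2) = 2*π by ring]
  rw [Real.sqrt_eq_rpow, ← Real.rpow_natCast ((2*π) ^ ((1:ℝ)/2)) (Fintype.card ι),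
    ← Real.rpow_mul (by positivity)]
  ring_nf

lemma integrable_exp_neg_half_dot :
    Integrable fun x : ι → ℝ => Real.exp (-(1/2) * (x ⬝ᵥ x)) := by
  have hx : ∀ x : ι → ℝ, Real.exp (-(1/2) * (x ⬝ᵥ x)) = ∏ i, Real.exp (-(1/2) * (x i)^2) := by
    intro x
    rw [← Real.exp_sum]
    congr 1
    rw [dotProduct, Finset.mul_sum]
    congr 1 with i
    ring
  simp_rw [hx]
  exact Integrable.fintype_prod (f := fun (_ : ι) (t : ℝ) => Real.exp (-(1/2) * t^2)) fun _ => by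
    simpa using integrable_exp_neg_mul_sq (by norm_num : (0:ℝ) < 1/2)
section posdefint
variable {A : Matrix ι ι ℝ}

lemma isHermitian_transpose_eq {M : Matrix ι ι ℝ} (h : M.IsHermitian) : Mᵀ = M := by
  rw [← Matrix.conjTranspose_eq_transpose_of_trivial]; exact h.eq

lemma posSemidef_det_nonneg {M : Matrix ι ι ℝ} (h : M.PosSemidef) : 0 ≤ M.det := by
  rw [h.isHermitian.det_eq_prod_eigenvalues]
  exact Finset.prod_nonneg fun i _ => h.eigenvalues_nonneg i

open scoped MatrixOrder in
lemma exists_sqrt (hA : A.PosDef) :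
    ∃ S : Matrix ι ι ℝ, S * S = A ∧ Sᵀ = S ∧ 0 < S.det := by
  refine ⟨CFC.sqrt A, CFC.sqrt_mul_sqrt_self A hA.posSemidef.nonneg,
    isHermitian_transpose_eq (CFC.sqrt_nonneg A).posSemidef.isHermitian, ?_⟩
  have hdetS : (CFC.sqrt A).det * (CFC.sqrt A).det = A.det := by
    rw [← Matrix.det_mul, CFC.sqrt_mul_sqrt_self A hA.posSemidef.nonneg]
  have hdet0 : (CFC.sqrt A).det ≠ 0 := by
    intro h; rw [h, mul_zero] at hdetS; exact hA.det_pos.ne' hdetS.symm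
  exact lt_of_le_of_ne (posSemidef_det_nonneg (CFC.sqrt_nonneg A).posSemidef) (Ne.symm hdet0)

lemma integral_exp_neg_half_quad (hA : A.PosDef) :
    ∫ x : ι → ℝ, Real.exp (-(1/2) * (x ⬝ᵥ (A *ᵥ x))) =
      (2*π) ^ ((Fintype.card ι : ℝ)/2) * A.det ^ (-(1:ℝ)/2) := by
  obtain ⟨S, hSS, hSt, hdetSpos⟩ := exists_sqrt hA
  have hdetS : S.det * S.det = A.det := by rw [← Matrix.det_mul, hSS]
  have hdetS0 : S.det ≠ 0 := hdetSpos.ne'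
  have hdetSinv : (S⁻¹).det ≠ 0 := by
    rw [Matrix.det_nonsing_inv, Ring.inverse_eq_inv]
    exact inv_ne_zero hdetS0
  have hquad : ∀ y : ι → ℝ, (S⁻¹ *ᵥ y) ⬝ᵥ (A *ᵥ (S⁻¹ *ᵥ y)) = y ⬝ᵥ y := by
    intro y
    rw [quad_comp]
    have h1 : (S⁻¹)ᵀ * A * S⁻¹ = 1 := by
      rw [Matrix.transpose_nonsing_inv, hSt, ← hSS, ← Matrix.mul_assoc,
        Matrix.nonsing_inv_mul _ hdetS0.isUnit, Matrix.one_mul,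
        Matrix.mul_nonsing_inv _ hdetS0.isUnit]
    rw [h1, Matrix.one_mulVec]
  have hcont : Continuous fun x : ι → ℝ => Real.exp (-(1/2) * (x ⬝ᵥ (A *ᵥ x))) :=
    Real.continuous_exp.comp (continuous_const.mul (continuous_quad _))
  have h := integral_comp_mulVec (fun x => Real.exp (-(1/2) * (x ⬝ᵥ (A *ᵥ x))))
    hcont.aestronglyMeasurable hdetSinv
  simp_rw [hquad] at h
  rw [integral_exp_neg_half_dot] at h
  have habs : |S⁻¹.det|⁻¹ = S.det := by
    rw [Matrix.det_nonsing_inv, Ring.inverse_eq_inv, abs_inv, inv_inv, abs_of_pos hdetSpos]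
  rw [habs] at h
  have hrd : A.det ^ (-(1:ℝ)/2) = (S.det)⁻¹ := by
    rw [← hdetS, show S.det * S.det = S.det ^ (2:ℕ) by ring,
      ← Real.rpow_natCast (S.det) 2, ← Real.rpow_mul hdetSpos.le]
    norm_num
    rw [Real.rpow_neg_one]
  rw [hrd, h]
  field_simp

lemma integrable_exp_neg_half_quad (hA : A.PosDef) :
    Integrable fun x : ι → ℝ => Real.exp (-(1/2) * (x ⬝ᵥ (A *ᵥ x))) := by
  obtain ⟨S, hSS, hSt, hdetSpos⟩ := exists_sqrt hA
  have hquad : ∀ x : ι → ℝ, (S *ᵥ x) ⬝ᵥ (S *ᵥ x) = x ⬝ᵥ (A *ᵥ x) := by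
    intro x
    have h1 : Sᵀ * 1 * S = A := by rw [Matrix.mul_one, hSt, hSS]
    calc (S *ᵥ x) ⬝ᵥ (S *ᵥ x) = (S *ᵥ x) ⬝ᵥ ((1 : Matrix ι ι ℝ) *ᵥ (S *ᵥ x)) := by
          rw [Matrix.one_mulVec]
      _ = x ⬝ᵥ ((Sᵀ * 1 * S) *ᵥ x) := quad_comp S 1 x
      _ = x ⬝ᵥ (A *ᵥ x) := by rw [h1]
  have hcd : Continuous fun y : ι → ℝ => Real.exp (-(1/2) * (y ⬝ᵥ y)) :=
    Real.continuous_exp.comp (continuous_const.mul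
      ((continuous_quad (1 : Matrix ι ι ℝ)).congr (by intro x; rw [Matrix.one_mulVec])))
  have h := integrable_comp_mulVec (f := fun y : ι → ℝ => Real.exp (-(1/2) * (y ⬝ᵥ y)))
    hcd.aestronglyMeasurable integrable_exp_neg_half_dot hdetSpos.ne' (M := S)
  have heq : (fun x : ι → ℝ => Real.exp (-(1/2) * ((S *ᵥ x) ⬝ᵥ (S *ᵥ x)))) =
      fun x => Real.exp (-(1/2) * (x ⬝ᵥ (A *ᵥ x))) := by
    funext x; rw [hquad]
  rwa [heq] at h

end posdefint
section woodbury
variable {n m : ℕ} (Ω : Matrix (Fin n) (Fin n) ℝ) (W : Matrix (Fin m) (Fin n) ℝ)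

lemma posSemidef_transpose_mul_self : (Wᵀ * W).PosSemidef := by
  rw [← Matrix.conjTranspose_eq_transpose_of_trivial]
  exact Matrix.posSemidef_conjTranspose_mul_self W

variable {Ω} (hΩ : Ω.PosDef)
include hΩ

lemma posDef_A : (Ω⁻¹ + Wᵀ * W).PosDef :=
  hΩ.inv.add_posSemidef (posSemidef_transpose_mul_self W)

lemma posDef_B : (W * Ω * Wᵀ + 1).PosDef := by
  refine Matrix.PosDef.posSemidef_add ?_ ?_
  · have := hΩ.posSemidef.mul_mul_conjTranspose_same W
    rwa [Matrix.conjTranspose_eq_transpose_of_trivial] at this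
  · exact Matrix.PosDef.one

lemma omega_mul_A : Ω * (Ω⁻¹ + Wᵀ * W) = 1 + Ω * (Wᵀ * W) := by
  rw [Matrix.mul_add, Matrix.mul_nonsing_inv _ hΩ.det_pos.ne'.isUnit]

lemma det_B_eq : (W * Ω * Wᵀ + 1).det = Ω.det * (Ω⁻¹ + Wᵀ * W).det := by
  rw [Matrix.det_mul_add_one_comm (W * Ω) Wᵀ, ← Matrix.mul_assoc Wᵀ W Ω,
    Matrix.det_mul_add_one_comm (Wᵀ * W) Ω, ← Matrix.det_mul, omega_mul_A W hΩ,
    add_comm (1 : Matrix (Fin n) (Fin n) ℝ)]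

lemma woodbury : (W * Ω * Wᵀ + 1)⁻¹ = 1 - W * (Ω⁻¹ + Wᵀ * W)⁻¹ * Wᵀ := by
  apply Matrix.inv_eq_right_inv
  set A := Ω⁻¹ + Wᵀ * W with hAdef
  have hAA : A * A⁻¹ = 1 := Matrix.mul_nonsing_inv _ (posDef_A W hΩ).det_pos.ne'.isUnit
  have e1 : W * Ω * A = W * Ω * Wᵀ * W + W := by
    rw [hAdef, Matrix.mul_add, Matrix.mul_assoc W Ω Ω⁻¹,
      Matrix.mul_nonsing_inv _ hΩ.det_pos.ne'.isUnit, Matrix.mul_one,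
      ← Matrix.mul_assoc (W * Ω) Wᵀ W, add_comm]
  have e2 : (W * Ω * Wᵀ * W + W) * A⁻¹ = W * Ω := by
    rw [← e1, Matrix.mul_assoc (W * Ω) A A⁻¹, hAA, Matrix.mul_one]
  have e3 : W * Ω * Wᵀ * (W * A⁻¹ * Wᵀ) + W * A⁻¹ * Wᵀ = W * Ω * Wᵀ := by
    have e4 : W * Ω * Wᵀ * (W * A⁻¹ * Wᵀ) + W * A⁻¹ * Wᵀ
        = (W * Ω * Wᵀ * W + W) * (A⁻¹ * Wᵀ) := by
      simp only [Matrix.add_mul, Matrix.mul_assoc]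
    rw [e4, ← Matrix.mul_assoc, e2, Matrix.mul_assoc]
  rw [Matrix.mul_sub, Matrix.mul_one, Matrix.add_mul, Matrix.one_mul, e3,
    add_sub_cancel_left]

end woodbury
section conv
variable {n m : ℕ} {Ω : Matrix (Fin n) (Fin n) ℝ} (W : Matrix (Fin m) (Fin n) ℝ)
  (hΩ : Ω.PosDef)
include hΩ

lemma quad_identity (s : Fin m → ℝ) (f : Fin n → ℝ) :
    (s + W *ᵥ f) ⬝ᵥ (s + W *ᵥ f) + f ⬝ᵥ (Ω⁻¹ *ᵥ f)
      = (f + ((Ω⁻¹ + Wᵀ * W)⁻¹ * Wᵀ) *ᵥ s) ⬝ᵥ ((Ω⁻¹ + Wᵀ * W) *ᵥ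
          (f + ((Ω⁻¹ + Wᵀ * W)⁻¹ * Wᵀ) *ᵥ s))
        + s ⬝ᵥ ((W * Ω * Wᵀ + 1)⁻¹ *ᵥ s) := by
  set A := Ω⁻¹ + Wᵀ * W with hAdef
  set c := (A⁻¹ * Wᵀ) *ᵥ s with hcdef
  have hA : A.PosDef := posDef_A W hΩ
  have hΩt : Ωᵀ = Ω := isHermitian_transpose_eq hΩ.isHermitian
  have hAt : Aᵀ = A := by
    rw [hAdef, Matrix.transpose_add, Matrix.transpose_nonsing_inv, hΩt,
      Matrix.transpose_mul, Matrix.transpose_transpose]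
  have hAc : A *ᵥ c = Wᵀ *ᵥ s := by
    rw [hcdef, Matrix.mulVec_mulVec, ← Matrix.mul_assoc,
      Matrix.mul_nonsing_inv _ hA.det_pos.ne'.isUnit, Matrix.one_mul]
  have h1 : (s + W *ᵥ f) ⬝ᵥ (s + W *ᵥ f)
      = s ⬝ᵥ s + 2 * ((W *ᵥ f) ⬝ᵥ s) + (W *ᵥ f) ⬝ᵥ (W *ᵥ f) := by
    rw [dotProduct_add, add_dotProduct, add_dotProduct, dotProduct_comm s (W *ᵥ f)]
    ring
  have p1 : f ⬝ᵥ (A *ᵥ f) = f ⬝ᵥ (Ω⁻¹ *ᵥ f) + (W *ᵥ f) ⬝ᵥ (W *ᵥ f) := by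
    rw [hAdef, Matrix.add_mulVec, dotProduct_add, mulVec_dot W f (W *ᵥ f),
      Matrix.mulVec_mulVec]
  have p2 : f ⬝ᵥ (A *ᵥ c) = (W *ᵥ f) ⬝ᵥ s := by
    rw [hAc, mulVec_dot]
  have p3 : c ⬝ᵥ (A *ᵥ f) = (W *ᵥ f) ⬝ᵥ s := by
    have h := mulVec_dot A f c
    rw [hAt, hAc] at h
    rw [dotProduct_comm c (A *ᵥ f), h, ← mulVec_dot W f s]
  have p4 : c ⬝ᵥ (A *ᵥ c) = s ⬝ᵥ ((W * A⁻¹ * Wᵀ) *ᵥ s) := by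
    rw [hAc, ← mulVec_dot W c s, hcdef, Matrix.mulVec_mulVec, ← Matrix.mul_assoc,
      dotProduct_comm]
  have h2 : (f + c) ⬝ᵥ (A *ᵥ (f + c))
      = f ⬝ᵥ (Ω⁻¹ *ᵥ f) + (W *ᵥ f) ⬝ᵥ (W *ᵥ f) + 2 * ((W *ᵥ f) ⬝ᵥ s)
        + s ⬝ᵥ ((W * A⁻¹ * Wᵀ) *ᵥ s) := by
    rw [Matrix.mulVec_add, dotProduct_add, add_dotProduct, add_dotProduct, p1, p2, p3, p4]
    ring
  have h3 : s ⬝ᵥ ((W * Ω * Wᵀ + 1)⁻¹ *ᵥ s)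
      = s ⬝ᵥ s - s ⬝ᵥ ((W * A⁻¹ * Wᵀ) *ᵥ s) := by
    rw [woodbury W hΩ, Matrix.sub_mulVec, dotProduct_sub, Matrix.one_mulVec, ← hAdef]
  rw [h1, h2, h3]
  ring

omit W hΩ in
lemma gaussPdf_one_apply (u : Fin m → ℝ) :
    gaussPdf (1 : Matrix (Fin m) (Fin m) ℝ) u
      = (2*π) ^ (-(m:ℝ)/2) * Real.exp (-(1/2) * (u ⬝ᵥ u)) := by
  unfold gaussPdf
  have hinv : (1 : Matrix (Fin m) (Fin m) ℝ)⁻¹ = 1 :=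
    Matrix.inv_eq_right_inv (by rw [Matrix.one_mul])
  rw [Matrix.det_one, hinv, Matrix.one_mulVec, Real.one_rpow, mul_one,
    Fintype.card_fin]

omit hΩ in
lemma integrable_gaussPdf {A : Matrix (Fin n) (Fin n) ℝ} (hA : A.PosDef) :
    Integrable (gaussPdf A) := by
  unfold gaussPdf
  simp_rw [mul_assoc]
  exact ((integrable_exp_neg_half_quad hA.inv).const_mul _).const_mul _

lemma convolution_identity (s : Fin m → ℝ) :
    ∫ f : Fin n → ℝ, gaussPdf (1 : Matrix (Fin m) (Fin m) ℝ) (s + W *ᵥ f) * gaussPdf Ω f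
      = gaussPdf (W * Ω * Wᵀ + 1) s := by
  set A := Ω⁻¹ + Wᵀ * W with hAdef
  set c := (A⁻¹ * Wᵀ) *ᵥ s with hcdef
  have hA : A.PosDef := posDef_A W hΩ
  set C : ℝ := (2*π) ^ (-(m:ℝ)/2) * ((2*π) ^ (-(n:ℝ)/2) * Ω.det ^ (-(1:ℝ)/2))
      * Real.exp (-(1/2) * (s ⬝ᵥ ((W * Ω * Wᵀ + 1)⁻¹ *ᵥ s))) with hCdef
  have hpt : ∀ f : Fin n → ℝ,
      gaussPdf (1 : Matrix (Fin m) (Fin m) ℝ) (s + W *ᵥ f) * gaussPdf Ω f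
        = C * Real.exp (-(1/2) * ((f + c) ⬝ᵥ (A *ᵥ (f + c)))) := by
    intro f
    rw [gaussPdf_one_apply]
    unfold gaussPdf
    rw [Fintype.card_fin]
    have hexp : Real.exp (-(1/2) * ((s + W *ᵥ f) ⬝ᵥ (s + W *ᵥ f)))
        * Real.exp (-(1/2) * (f ⬝ᵥ (Ω⁻¹ *ᵥ f)))
        = Real.exp (-(1/2) * ((f + c) ⬝ᵥ (A *ᵥ (f + c))))
          * Real.exp (-(1/2) * (s ⬝ᵥ ((W * Ω * Wᵀ + 1)⁻¹ *ᵥ s))) := by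
      rw [← Real.exp_add, ← Real.exp_add, ← mul_add, ← mul_add, quad_identity W hΩ s f]
    calc (2*π) ^ (-(m:ℝ)/2) * Real.exp (-(1/2) * ((s + W *ᵥ f) ⬝ᵥ (s + W *ᵥ f)))
          * ((2*π) ^ (-(n:ℝ)/2) * Ω.det ^ (-(1:ℝ)/2) * Real.exp (-(1/2) * (f ⬝ᵥ (Ω⁻¹ *ᵥ f))))
        = (2*π) ^ (-(m:ℝ)/2) * ((2*π) ^ (-(n:ℝ)/2) * Ω.det ^ (-(1:ℝ)/2))
            * (Real.exp (-(1/2) * ((s + W *ᵥ f) ⬝ᵥ (s + W *ᵥ f)))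
              * Real.exp (-(1/2) * (f ⬝ᵥ (Ω⁻¹ *ᵥ f)))) := by ring
      _ = C * Real.exp (-(1/2) * ((f + c) ⬝ᵥ (A *ᵥ (f + c)))) := by
          rw [hexp, hCdef]; ring
  simp_rw [hpt]
  rw [MeasureTheory.integral_const_mul]
  have htrans : ∫ f : Fin n → ℝ, Real.exp (-(1/2) * ((f + c) ⬝ᵥ (A *ᵥ (f + c))))
      = ∫ y : Fin n → ℝ, Real.exp (-(1/2) * (y ⬝ᵥ (A *ᵥ y))) :=
    integral_add_right_eq_self (fun y : Fin n → ℝ => Real.exp (-(1/2) * (y ⬝ᵥ (A *ᵥ y)))) c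
  rw [htrans, integral_exp_neg_half_quad hA, Fintype.card_fin]
  -- now pure constant algebra
  unfold gaussPdf
  rw [Fintype.card_fin]
  have hdetB : (W * Ω * Wᵀ + 1).det = Ω.det * A.det := det_B_eq W hΩ
  rw [hCdef, hdetB, Real.mul_rpow hΩ.det_pos.le hA.det_pos.le]
  have h2pi : (2*π) ^ (-(n:ℝ)/2) * (2*π) ^ ((n:ℝ)/2) = 1 := by
    rw [← Real.rpow_add (by positivity), show -(n:ℝ)/2 + (n:ℝ)/2 = 0 by ring,
      Real.rpow_zero]
  calc (2*π) ^ (-(m:ℝ)/2) * ((2*π) ^ (-(n:ℝ)/2) * Ω.det ^ (-(1:ℝ)/2))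
        * Real.exp (-(1/2) * (s ⬝ᵥ ((W * Ω * Wᵀ + 1)⁻¹ *ᵥ s)))
        * ((2*π) ^ ((n:ℝ)/2) * A.det ^ (-(1:ℝ)/2))
      = ((2*π) ^ (-(n:ℝ)/2) * (2*π) ^ ((n:ℝ)/2)) * ((2*π) ^ (-(m:ℝ)/2)
          * (Ω.det ^ (-(1:ℝ)/2) * A.det ^ (-(1:ℝ)/2))
          * Real.exp (-(1/2) * (s ⬝ᵥ ((W * Ω * Wᵀ + 1)⁻¹ *ᵥ s)))) := by ring
    _ = (2*π) ^ (-(m:ℝ)/2) * (Ω.det ^ (-(1:ℝ)/2) * A.det ^ (-(1:ℝ)/2))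
          * Real.exp (-(1/2) * (s ⬝ᵥ ((W * Ω * Wᵀ + 1)⁻¹ *ᵥ s))) := by
        rw [h2pi]; ring

end conv
section main
variable {n m : ℕ}

lemma measurableSet_lowerSet (a : Fin m → ℝ) :
    MeasurableSet {s : Fin m → ℝ | ∀ i, s i ≤ a i} := by
  have : {s : Fin m → ℝ | ∀ i, s i ≤ a i} = ⋂ i, {s : Fin m → ℝ | s i ≤ a i} := by
    ext s; simp [Set.mem_iInter]
  rw [this]
  exact MeasurableSet.iInter fun i => measurableSet_le (measurable_pi_apply i) measurable_const

lemma continuous_mulVecW (W : Matrix (Fin m) (Fin n) ℝ) :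
    Continuous fun x : Fin n → ℝ => W *ᵥ x := by
  have := (Matrix.mulVecLin W).continuous_on_pi
  exact this

theorem affine_probit_marginal_likelihood' (n m : ℕ)
    (ξ : Fin n → ℝ) (Ω : Matrix (Fin n) (Fin n) ℝ) (hΩ : Ω.PosDef)
    (W : Matrix (Fin m) (Fin n) ℝ) :
    ∫ f : Fin n → ℝ,
        gaussCdf (1 : Matrix (Fin m) (Fin m) ℝ) (W.mulVec f) * gaussPdf Ω (f - ξ) =
      gaussCdf (W * Ω * Wᵀ + 1) (W.mulVec ξ) := by
  have h1pos : (1 : Matrix (Fin m) (Fin m) ℝ).PosDef := Matrix.PosDef.one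
  have h1det : (0:ℝ) ≤ (1 : Matrix (Fin m) (Fin m) ℝ).det := by
    rw [Matrix.det_one]; norm_num
  have hΩdet : (0:ℝ) ≤ Ω.det := hΩ.det_pos.le
  set K : Set (Fin m → ℝ) := {s | ∀ i, s i ≤ (W *ᵥ ξ) i} with hKdef
  have hKmeas : MeasurableSet K := measurableSet_lowerSet _
  -- Step A: shift outer variable
  have stepA : ∫ f : Fin n → ℝ, gaussCdf (1 : Matrix (Fin m) (Fin m) ℝ) (W *ᵥ f) * gaussPdf Ω (f - ξ)
      = ∫ f : Fin n → ℝ, gaussCdf (1 : Matrix (Fin m) (Fin m) ℝ) (W *ᵥ (f + ξ)) * gaussPdf Ω f := by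
    have h := integral_add_right_eq_self (μ := volume)
      (fun f : Fin n → ℝ => gaussCdf (1 : Matrix (Fin m) (Fin m) ℝ) (W *ᵥ f) * gaussPdf Ω (f - ξ)) ξ
    simp only [add_sub_cancel_right] at h
    exact h.symm
  -- Step B: inner translation
  have stepB : ∀ f : Fin n → ℝ, gaussCdf (1 : Matrix (Fin m) (Fin m) ℝ) (W *ᵥ (f + ξ))
      = ∫ s : Fin m → ℝ, K.indicator (fun s => gaussPdf (1 : Matrix (Fin m) (Fin m) ℝ) (s + W *ᵥ f)) s := by
    intro f
    unfold gaussCdf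
    rw [← MeasureTheory.integral_indicator (measurableSet_lowerSet _)]
    have h := integral_add_right_eq_self (μ := volume)
      (fun t : Fin m → ℝ => Set.indicator {t : Fin m → ℝ | ∀ i, t i ≤ (W *ᵥ (f + ξ)) i}
        (gaussPdf (1 : Matrix (Fin m) (Fin m) ℝ)) t) (W *ᵥ f)
    rw [← h]
    congr 1
    funext s
    have hmem : (s + W *ᵥ f ∈ {t : Fin m → ℝ | ∀ i, t i ≤ (W *ᵥ (f + ξ)) i}) ↔ s ∈ K := by
      simp only [Set.mem_setOf_eq, hKdef, Matrix.mulVec_add, Pi.add_apply]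
      constructor
      · intro h i; linarith [h i]
      · intro h i; linarith [h i]
    by_cases hs : s ∈ K
    · rw [Set.indicator_of_mem (hmem.mpr hs), Set.indicator_of_mem hs]
    · rw [Set.indicator_of_notMem (fun hc => hs (hmem.mp hc)), Set.indicator_of_notMem hs]
  -- the two-variable integrand
  set F : (Fin n → ℝ) → (Fin m → ℝ) → ℝ :=
    fun f s => K.indicator (fun s => gaussPdf (1 : Matrix (Fin m) (Fin m) ℝ) (s + W *ᵥ f) * gaussPdf Ω f) s
    with hFdef
  have hFapp : ∀ (f : Fin n → ℝ) (s : Fin m → ℝ), F f s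
      = K.indicator (fun s => gaussPdf (1 : Matrix (Fin m) (Fin m) ℝ) (s + W *ᵥ f) * gaussPdf Ω f) s :=
    fun f s => rfl
  have hgpos : ∀ u : Fin m → ℝ, 0 ≤ gaussPdf (1 : Matrix (Fin m) (Fin m) ℝ) u :=
    gaussPdf_nonneg h1det
  have hΩpos : ∀ u : Fin n → ℝ, 0 ≤ gaussPdf Ω u := gaussPdf_nonneg hΩdet
  have hFnonneg : ∀ f s, 0 ≤ F f s := by
    intro f s
    exact Set.indicator_nonneg (fun s _ => mul_nonneg (hgpos _) (hΩpos _)) s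
  -- measurability of uncurried F
  have hcont2 : Continuous fun p : (Fin n → ℝ) × (Fin m → ℝ) =>
      gaussPdf (1 : Matrix (Fin m) (Fin m) ℝ) (p.2 + W *ᵥ p.1) * gaussPdf Ω p.1 := by
    exact ((continuous_gaussPdf _).comp
        (continuous_snd.add ((continuous_mulVecW W).comp continuous_fst))).mul
      ((continuous_gaussPdf Ω).comp continuous_fst)
  have hFuncurry : Function.uncurry F = Set.indicator {p : (Fin n → ℝ) × (Fin m → ℝ) | p.2 ∈ K}
      (fun p => gaussPdf (1 : Matrix (Fin m) (Fin m) ℝ) (p.2 + W *ᵥ p.1) * gaussPdf Ω p.1) := by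
    funext p
    rcases p with ⟨f, s⟩
    by_cases hs : s ∈ K
    · rw [Function.uncurry_apply_pair, hFapp, Set.indicator_of_mem hs,
        Set.indicator_of_mem (show (f, s) ∈ {p : (Fin n → ℝ) × (Fin m → ℝ) | p.2 ∈ K} from hs)]
    · rw [Function.uncurry_apply_pair, hFapp, Set.indicator_of_notMem hs,
        Set.indicator_of_notMem (show (f, s) ∉ {p : (Fin n → ℝ) × (Fin m → ℝ) | p.2 ∈ K} from hs)]
  have hsetmeas : MeasurableSet {p : (Fin n → ℝ) × (Fin m → ℝ) | p.2 ∈ K} :=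
    measurable_snd hKmeas
  have hFmeas : AEStronglyMeasurable (Function.uncurry F)
      ((volume : Measure (Fin n → ℝ)).prod (volume : Measure (Fin m → ℝ))) := by
    rw [hFuncurry]
    exact ((hcont2.measurable.indicator hsetmeas).stronglyMeasurable).aestronglyMeasurable
  -- integrability of each slice
  have hslice : ∀ f : Fin n → ℝ, Integrable (F f) := by
    intro f
    apply Integrable.indicator _ hKmeas
    exact ((integrable_gaussPdf h1pos).comp_add_right (W *ᵥ f)).mul_const _
  -- slice integral bound
  set C0 : ℝ := ∫ s : Fin m → ℝ, gaussPdf (1 : Matrix (Fin m) (Fin m) ℝ) s with hC0def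
  have hsliceint : ∀ f : Fin n → ℝ, ∫ s, ‖F f s‖ ≤ C0 * gaussPdf Ω f := by
    intro f
    have hnorm : ∀ s, ‖F f s‖ = F f s := fun s => Real.norm_of_nonneg (hFnonneg f s)
    simp_rw [hnorm]
    have hle : ∀ s, F f s ≤ gaussPdf (1 : Matrix (Fin m) (Fin m) ℝ) (s + W *ᵥ f) * gaussPdf Ω f := by
      intro s
      exact Set.indicator_le_self' (fun s _ => mul_nonneg (hgpos _) (hΩpos _)) s
    have hint2 : Integrable fun s : Fin m → ℝ =>
        gaussPdf (1 : Matrix (Fin m) (Fin m) ℝ) (s + W *ᵥ f) * gaussPdf Ω f :=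
      ((integrable_gaussPdf h1pos).comp_add_right (W *ᵥ f)).mul_const _
    calc ∫ s, F f s ≤ ∫ s, gaussPdf (1 : Matrix (Fin m) (Fin m) ℝ) (s + W *ᵥ f) * gaussPdf Ω f :=
          MeasureTheory.integral_mono (hslice f) hint2 hle
      _ = (∫ s, gaussPdf (1 : Matrix (Fin m) (Fin m) ℝ) (s + W *ᵥ f)) * gaussPdf Ω f := by
          rw [MeasureTheory.integral_mul_const]
      _ = C0 * gaussPdf Ω f := by
          rw [integral_add_right_eq_self (gaussPdf (1 : Matrix (Fin m) (Fin m) ℝ)) (W *ᵥ f)]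
  have hC0nonneg : 0 ≤ C0 := MeasureTheory.integral_nonneg hgpos
  -- integrability of uncurried F
  have hFint : Integrable (Function.uncurry F)
      ((volume : Measure (Fin n → ℝ)).prod (volume : Measure (Fin m → ℝ))) := by
    rw [MeasureTheory.integrable_prod_iff hFmeas]
    constructor
    · exact Filter.Eventually.of_forall fun f => hslice f
    · apply MeasureTheory.Integrable.mono' (((integrable_gaussPdf hΩ)).const_mul C0)
      · exact hFmeas.norm.integral_prod_right'
      · apply Filter.Eventually.of_forall
        intro f
        have h0 : 0 ≤ ∫ s : Fin m → ℝ, ‖Function.uncurry F (f, s)‖ :=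
          MeasureTheory.integral_nonneg fun s => norm_nonneg _
        rw [Real.norm_of_nonneg h0]
        exact hsliceint f
  -- Fubini
  have swap : ∫ f : Fin n → ℝ, ∫ s : Fin m → ℝ, F f s
      = ∫ s : Fin m → ℝ, ∫ f : Fin n → ℝ, F f s := by
    exact MeasureTheory.integral_integral_swap hFint
  -- assemble
  rw [stepA]
  have hLHS : ∫ f : Fin n → ℝ, gaussCdf (1 : Matrix (Fin m) (Fin m) ℝ) (W *ᵥ (f + ξ)) * gaussPdf Ω f
      = ∫ f : Fin n → ℝ, ∫ s : Fin m → ℝ, F f s := by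
    congr 1
    funext f
    rw [stepB f, ← MeasureTheory.integral_mul_const]
    congr 1
    funext s
    by_cases hs : s ∈ K
    · rw [hFapp, Set.indicator_of_mem hs, Set.indicator_of_mem hs]
    · rw [hFapp, Set.indicator_of_notMem hs, Set.indicator_of_notMem hs, zero_mul]
  rw [hLHS, swap]
  have hinner : ∀ s : Fin m → ℝ, ∫ f : Fin n → ℝ, F f s
      = K.indicator (gaussPdf (W * Ω * Wᵀ + 1)) s := by
    intro s
    by_cases hs : s ∈ K
    · rw [Set.indicator_of_mem hs]
      have : ∀ f : Fin n → ℝ, F f s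
          = gaussPdf (1 : Matrix (Fin m) (Fin m) ℝ) (s + W *ᵥ f) * gaussPdf Ω f := by
        intro f; rw [hFapp, Set.indicator_of_mem hs]
      simp_rw [this]
      exact convolution_identity W hΩ s
    · rw [Set.indicator_of_notMem hs]
      have : ∀ f : Fin n → ℝ, F f s = 0 := by
        intro f; rw [hFapp, Set.indicator_of_notMem hs]
      simp_rw [this]
      exact MeasureTheory.integral_zero _ _
  simp_rw [hinner]
  rw [MeasureTheory.integral_indicator hKmeas]
  rfl

end main

/-- the marginal likelihood of the affine probit model under a normal prior
equals a single multivariate normal CDF: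
`∫ Φ_m(W f) φ_n(f − ξ; Ω) df = Φ_m(W ξ; W Ω Wᵀ + I_m)`. -/
theorem affine_probit_marginal_likelihood (n m : ℕ) (hn : 1 ≤ n) (hm : 1 ≤ m)
    (ξ : Fin n → ℝ) (Ω : Matrix (Fin n) (Fin n) ℝ) (hΩ : Ω.PosDef)
    (W : Matrix (Fin m) (Fin n) ℝ) :
    ∫ f : Fin n → ℝ,
        gaussCdf (1 : Matrix (Fin m) (Fin m) ℝ) (W.mulVec f) * gaussPdf Ω (f - ξ) =
      gaussCdf (W * Ω * Wᵀ + 1) (W.mulVec ξ) := by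
  exact affine_probit_marginal_likelihood' n m ξ Ω hΩ W
end

section
/- Additive representation of the unified skew-normal (density form of the sampling scheme): let (ξ, Ω, Δ, γ, Γ) be unified skew-normal parameters with Ω = D_Ω Ω̄ D_Ω positive definite, Γ positive definite, M = [[Γ, Δᵀ],[Δ, Ω̄]] positive definite, and Φ_s(γ; Γ) > 0. Let u₀ have density φ_p(·; Ω̄ − Δ Γ⁻¹ Δᵀ) and let u₁ have the density of N_s(0, Γ) truncated componentwise below −γ, i.e., t ↦ 1_{{t + γ > 0}} φ_s(t; Γ)/Φ_s(γ; Γ), independent of u₀. Then the density of z := ξ + D_Ω (u₀ + Δ Γ⁻¹ u₁) is the SUN_{p,s}(ξ, Ω, Δ, γ, Γ) density; equivalently, for every z ∈ ℝ^p, (det D_Ω)⁻¹ ∫_{{t ∈ ℝ^s : t + γ > 0}} φ_p(D_Ω⁻¹(z − ξ) − Δ Γ⁻¹ t; Ω̄ − Δ Γ⁻¹ Δᵀ) · φ_s(t; Γ)/Φ_s(γ; Γ) dt = sun(z). -/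
open MeasureTheory Real Matrix

section Aux
variable {ι κ : Type*} [Fintype ι] [DecidableEq ι] [Fintype κ] [DecidableEq κ]

lemma posDef_transpose_eq {M : Matrix ι ι ℝ} (h : M.PosDef) : Mᵀ = M := by
  have h1 := h.1
  rwa [Matrix.IsHermitian, Matrix.conjTranspose_eq_transpose_of_trivial] at h1

lemma posDef_inv_transpose_eq {M : Matrix ι ι ℝ} (h : M.PosDef) : (M⁻¹)ᵀ = M⁻¹ := by
  rw [Matrix.transpose_nonsing_inv, posDef_transpose_eq h]

lemma posDef_isUnit_det {M : Matrix ι ι ℝ} (h : M.PosDef) : IsUnit M.det :=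
  isUnit_iff_ne_zero.mpr h.det_pos.ne'

lemma dot_shift {m n : Type*} [Fintype m] [Fintype n] (A : Matrix m n ℝ) (u : m → ℝ) (v : n → ℝ) :
    u ⬝ᵥ A *ᵥ v = (Aᵀ *ᵥ u) ⬝ᵥ v := by
  rw [Matrix.dotProduct_mulVec, Matrix.mulVec_transpose]

lemma dot_sym {S : Matrix ι ι ℝ} (hS : Sᵀ = S) (u v : ι → ℝ) :
    u ⬝ᵥ S *ᵥ v = v ⬝ᵥ S *ᵥ u := by
  rw [dot_shift, hS, dotProduct_comm]

lemma dot3l {κ' : Type*} [Fintype κ'] (A : Matrix ι κ ℝ) (S : Matrix ι κ' ℝ) (u : κ → ℝ) (v : κ' → ℝ) :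
    (A *ᵥ u) ⬝ᵥ S *ᵥ v = u ⬝ᵥ (Aᵀ * S) *ᵥ v := by
  rw [dot_shift, dot_shift (Aᵀ * S) u v, Matrix.transpose_mul, Matrix.transpose_transpose,
    ← Matrix.mulVec_mulVec]

lemma cross_aux (O : Matrix ι ι ℝ) (Δ : Matrix ι κ ℝ) (Γ : Matrix κ κ ℝ)
    (hO : IsUnit O.det) (hΓ : IsUnit Γ.det) :
    Δ * Γ⁻¹ * (Γ - Δᵀ * O⁻¹ * Δ) = (O - Δ * Γ⁻¹ * Δᵀ) * O⁻¹ * Δ := by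
  have h1 : Γ⁻¹ * Γ = 1 := Matrix.nonsing_inv_mul _ hΓ
  have h2 : O * O⁻¹ = 1 := Matrix.mul_nonsing_inv _ hO
  simp only [Matrix.mul_sub, Matrix.sub_mul, Matrix.mul_assoc, h1, Matrix.mul_one]
  rw [← Matrix.mul_assoc O O⁻¹ Δ, h2, Matrix.one_mul]

lemma woodbury_s11 (O : Matrix ι ι ℝ) (Δ : Matrix ι κ ℝ) (Γ : Matrix κ κ ℝ)
    (hO : IsUnit O.det) (hΓ : IsUnit Γ.det)
    (hΨ : IsUnit (O - Δ * Γ⁻¹ * Δᵀ).det) (hΛ : IsUnit (Γ - Δᵀ * O⁻¹ * Δ).det) :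
    (O - Δ * Γ⁻¹ * Δᵀ)⁻¹
      = O⁻¹ + O⁻¹ * Δ * (Γ - Δᵀ * O⁻¹ * Δ)⁻¹ * Δᵀ * O⁻¹ := by
  apply Matrix.inv_eq_right_inv
  have hc := cross_aux O Δ Γ hO hΓ
  rw [Matrix.mul_add]
  have e1 : (O - Δ * Γ⁻¹ * Δᵀ) * (O⁻¹ * Δ * (Γ - Δᵀ * O⁻¹ * Δ)⁻¹ * Δᵀ * O⁻¹)
      = Δ * Γ⁻¹ * Δᵀ * O⁻¹ := by
    have e2 : (O - Δ * Γ⁻¹ * Δᵀ) * (O⁻¹ * Δ * (Γ - Δᵀ * O⁻¹ * Δ)⁻¹ * Δᵀ * O⁻¹)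
        = ((O - Δ * Γ⁻¹ * Δᵀ) * O⁻¹ * Δ) * (Γ - Δᵀ * O⁻¹ * Δ)⁻¹ * (Δᵀ * O⁻¹) := by
      simp only [Matrix.mul_assoc]
    rw [e2, ← hc, Matrix.mul_nonsing_inv_cancel_right _ _ hΛ]
    simp only [Matrix.mul_assoc]
  rw [e1, Matrix.sub_mul, Matrix.mul_nonsing_inv _ hO]
  abel

lemma woodbury' (O : Matrix ι ι ℝ) (Δ : Matrix ι κ ℝ) (Γ : Matrix κ κ ℝ)
    (hO : IsUnit O.det) (hΓ : IsUnit Γ.det)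
    (hΨ : IsUnit (O - Δ * Γ⁻¹ * Δᵀ).det) (hΛ : IsUnit (Γ - Δᵀ * O⁻¹ * Δ).det) :
    (Γ - Δᵀ * O⁻¹ * Δ)⁻¹
      = Γ⁻¹ + Γ⁻¹ * Δᵀ * (O - Δ * Γ⁻¹ * Δᵀ)⁻¹ * Δ * Γ⁻¹ := by
  have h := woodbury_s11 Γ Δᵀ O hΓ hO (by simpa using hΛ) (by simpa using hΨ)
  simpa using h

lemma cross_inv (O : Matrix ι ι ℝ) (Δ : Matrix ι κ ℝ) (Γ : Matrix κ κ ℝ)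
    (hO : IsUnit O.det) (hΓ : IsUnit Γ.det)
    (hΨ : IsUnit (O - Δ * Γ⁻¹ * Δᵀ).det) (hΛ : IsUnit (Γ - Δᵀ * O⁻¹ * Δ).det) :
    (O - Δ * Γ⁻¹ * Δᵀ)⁻¹ * (Δ * Γ⁻¹) = O⁻¹ * Δ * (Γ - Δᵀ * O⁻¹ * Δ)⁻¹ := by
  have hc := cross_aux O Δ Γ hO hΓ
  have key : (O - Δ * Γ⁻¹ * Δᵀ) * (O⁻¹ * Δ * (Γ - Δᵀ * O⁻¹ * Δ)⁻¹) = Δ * Γ⁻¹ := by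
    rw [← Matrix.mul_assoc, ← Matrix.mul_assoc, ← hc,
      Matrix.mul_nonsing_inv_cancel_right _ _ hΛ]
  calc (O - Δ * Γ⁻¹ * Δᵀ)⁻¹ * (Δ * Γ⁻¹)
      = (O - Δ * Γ⁻¹ * Δᵀ)⁻¹ * ((O - Δ * Γ⁻¹ * Δᵀ) * (O⁻¹ * Δ * (Γ - Δᵀ * O⁻¹ * Δ)⁻¹)) := by
        rw [key]
    _ = O⁻¹ * Δ * (Γ - Δᵀ * O⁻¹ * Δ)⁻¹ :=
        Matrix.nonsing_inv_mul_cancel_left _ _ hΨ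

lemma dot_transpose (M : Matrix ι κ ℝ) (u : ι → ℝ) (v : κ → ℝ) :
    u ⬝ᵥ M *ᵥ v = v ⬝ᵥ Mᵀ *ᵥ u := by
  rw [dot_shift, dotProduct_comm]

lemma quad_eq (O : Matrix ι ι ℝ) (Δ : Matrix ι κ ℝ) (Γ : Matrix κ κ ℝ)
    (hO : O.PosDef) (hΓ : Γ.PosDef)
    (hΨ : (O - Δ * Γ⁻¹ * Δᵀ).PosDef) (hΛ : (Γ - Δᵀ * O⁻¹ * Δ).PosDef)
    (x : ι → ℝ) (t : κ → ℝ) :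
    (x - (Δ * Γ⁻¹) *ᵥ t) ⬝ᵥ (O - Δ * Γ⁻¹ * Δᵀ)⁻¹ *ᵥ (x - (Δ * Γ⁻¹) *ᵥ t) + t ⬝ᵥ Γ⁻¹ *ᵥ t
      = x ⬝ᵥ O⁻¹ *ᵥ x
        + (t - (Δᵀ * O⁻¹) *ᵥ x) ⬝ᵥ (Γ - Δᵀ * O⁻¹ * Δ)⁻¹ *ᵥ (t - (Δᵀ * O⁻¹) *ᵥ x) := by
  have hOs := posDef_inv_transpose_eq hO
  have hΓs := posDef_inv_transpose_eq hΓ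
  have hΨs := posDef_inv_transpose_eq hΨ
  have hΛs := posDef_inv_transpose_eq hΛ
  have uO := posDef_isUnit_det hO
  have uΓ := posDef_isUnit_det hΓ
  have uΨ := posDef_isUnit_det hΨ
  have uΛ := posDef_isUnit_det hΛ
  have R1 := woodbury_s11 O Δ Γ uO uΓ uΨ uΛ
  have R2 := cross_inv O Δ Γ uO uΓ uΨ uΛ
  have R4' := woodbury' O Δ Γ uO uΓ uΨ uΛ
  have R3 := congrArg Matrix.transpose R2
  simp only [Matrix.mul_assoc] at hΨs hΛs
  simp only [Matrix.transpose_mul, Matrix.transpose_transpose, hOs, hΓs, hΨs, hΛs,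
    Matrix.mul_assoc] at R1 R2 R3 R4'
  have R4 : Γ⁻¹ * (Δᵀ * ((O - Δ * (Γ⁻¹ * Δᵀ))⁻¹ * (Δ * Γ⁻¹)))
      = (Γ - Δᵀ * (O⁻¹ * Δ))⁻¹ - Γ⁻¹ := by
    rw [R4', add_sub_cancel_left]
  have R5 : t ⬝ᵥ ((Γ - Δᵀ * (O⁻¹ * Δ))⁻¹ * (Δᵀ * O⁻¹)) *ᵥ x
      = x ⬝ᵥ (O⁻¹ * (Δ * (Γ - Δᵀ * (O⁻¹ * Δ))⁻¹)) *ᵥ t := by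
    rw [dot_transpose]
    simp only [Matrix.transpose_mul, Matrix.transpose_transpose, hOs, hΛs, Matrix.mul_assoc]
  simp only [Matrix.mulVec_sub, sub_dotProduct, dotProduct_sub,
    Matrix.mulVec_mulVec, dot3l, Matrix.transpose_mul, Matrix.transpose_transpose,
    hOs, hΓs, hΨs, hΛs, Matrix.mul_assoc]
  rw [R4, R2, R3, R1]
  simp only [Matrix.add_mulVec, Matrix.sub_mulVec, dotProduct_add,
    dotProduct_sub, Matrix.mulVec_mulVec, Matrix.mul_assoc]
  rw [R5]
  ring


lemma det_factor (O : Matrix ι ι ℝ) (Δ : Matrix ι κ ℝ) (Γ : Matrix κ κ ℝ)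
    (hO : O.PosDef) (hΓ : Γ.PosDef) :
    (O - Δ * Γ⁻¹ * Δᵀ).det * Γ.det = O.det * (Γ - Δᵀ * O⁻¹ * Δ).det := by
  have iΓ : Invertible Γ := Γ.invertibleOfIsUnitDet (posDef_isUnit_det hΓ)
  have iO : Invertible O := O.invertibleOfIsUnitDet (posDef_isUnit_det hO)
  have h1 := Matrix.det_fromBlocks₁₁ Γ Δᵀ Δ O
  have h2 := Matrix.det_fromBlocks₂₂ Γ Δᵀ Δ O
  rw [invOf_eq_nonsing_inv] at h1 h2
  rw [h1] at h2
  rw [mul_comm]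
  exact h2

lemma gauss_factor (O : Matrix ι ι ℝ) (Δ : Matrix ι κ ℝ) (Γ : Matrix κ κ ℝ)
    (hO : O.PosDef) (hΓ : Γ.PosDef)
    (hΨ : (O - Δ * Γ⁻¹ * Δᵀ).PosDef) (hΛ : (Γ - Δᵀ * O⁻¹ * Δ).PosDef)
    (x : ι → ℝ) (t : κ → ℝ) :
    gaussPdf (O - Δ * Γ⁻¹ * Δᵀ) (x - (Δ * Γ⁻¹) *ᵥ t) * gaussPdf Γ t
      = gaussPdf O x * gaussPdf (Γ - Δᵀ * O⁻¹ * Δ) (t - (Δᵀ * O⁻¹) *ᵥ x) := by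
  unfold gaussPdf
  have key1 : (O - Δ * Γ⁻¹ * Δᵀ).det ^ (-(1:ℝ)/2) * Γ.det ^ (-(1:ℝ)/2)
      = O.det ^ (-(1:ℝ)/2) * (Γ - Δᵀ * O⁻¹ * Δ).det ^ (-(1:ℝ)/2) := by
    rw [← Real.mul_rpow hΨ.det_pos.le hΓ.det_pos.le,
      ← Real.mul_rpow hO.det_pos.le hΛ.det_pos.le, det_factor O Δ Γ hO hΓ]
  have key2 : Real.exp (-(1/2) * ((x - (Δ * Γ⁻¹) *ᵥ t) ⬝ᵥ (O - Δ * Γ⁻¹ * Δᵀ)⁻¹ *ᵥ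
        (x - (Δ * Γ⁻¹) *ᵥ t))) * Real.exp (-(1/2) * (t ⬝ᵥ Γ⁻¹ *ᵥ t))
      = Real.exp (-(1/2) * (x ⬝ᵥ O⁻¹ *ᵥ x)) * Real.exp (-(1/2) * ((t - (Δᵀ * O⁻¹) *ᵥ x) ⬝ᵥ
        (Γ - Δᵀ * O⁻¹ * Δ)⁻¹ *ᵥ (t - (Δᵀ * O⁻¹) *ᵥ x))) := by
    rw [← Real.exp_add, ← Real.exp_add]
    congr 1
    have h := quad_eq O Δ Γ hO hΓ hΨ hΛ x t
    linarith
  calc ((2 * π) ^ (-(Fintype.card ι : ℝ) / 2) * (O - Δ * Γ⁻¹ * Δᵀ).det ^ (-(1:ℝ)/2) *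
          Real.exp (-(1/2) * ((x - (Δ * Γ⁻¹) *ᵥ t) ⬝ᵥ (O - Δ * Γ⁻¹ * Δᵀ)⁻¹ *ᵥ
            (x - (Δ * Γ⁻¹) *ᵥ t)))) *
        ((2 * π) ^ (-(Fintype.card κ : ℝ) / 2) * Γ.det ^ (-(1:ℝ)/2) *
          Real.exp (-(1/2) * (t ⬝ᵥ Γ⁻¹ *ᵥ t)))
      = ((2 * π) ^ (-(Fintype.card ι : ℝ) / 2) * (2 * π) ^ (-(Fintype.card κ : ℝ) / 2)) *
        ((O - Δ * Γ⁻¹ * Δᵀ).det ^ (-(1:ℝ)/2) * Γ.det ^ (-(1:ℝ)/2)) *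
        (Real.exp (-(1/2) * ((x - (Δ * Γ⁻¹) *ᵥ t) ⬝ᵥ (O - Δ * Γ⁻¹ * Δᵀ)⁻¹ *ᵥ
            (x - (Δ * Γ⁻¹) *ᵥ t))) * Real.exp (-(1/2) * (t ⬝ᵥ Γ⁻¹ *ᵥ t))) := by ring
    _ = ((2 * π) ^ (-(Fintype.card ι : ℝ) / 2) * (2 * π) ^ (-(Fintype.card κ : ℝ) / 2)) *
        (O.det ^ (-(1:ℝ)/2) * (Γ - Δᵀ * O⁻¹ * Δ).det ^ (-(1:ℝ)/2)) *
        (Real.exp (-(1/2) * (x ⬝ᵥ O⁻¹ *ᵥ x)) * Real.exp (-(1/2) * ((t - (Δᵀ * O⁻¹) *ᵥ x) ⬝ᵥ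
          (Γ - Δᵀ * O⁻¹ * Δ)⁻¹ *ᵥ (t - (Δᵀ * O⁻¹) *ᵥ x)))) := by rw [key1, key2]
    _ = _ := by ring

lemma gauss_even (S : Matrix ι ι ℝ) (u : ι → ℝ) : gaussPdf S (-u) = gaussPdf S u := by
  unfold gaussPdf
  rw [Matrix.mulVec_neg, neg_dotProduct, dotProduct_neg, neg_neg]

lemma posDef_block₂₂ {A : Matrix κ κ ℝ} {B : Matrix κ ι ℝ} {C : Matrix ι κ ℝ}
    {Dm : Matrix ι ι ℝ} (h : (Matrix.fromBlocks A B C Dm).PosDef) : Dm.PosDef := by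
  rw [Matrix.posDef_iff_dotProduct_mulVec]
  constructor
  · have h1 := h.1
    rw [Matrix.IsHermitian, Matrix.fromBlocks_conjTranspose] at h1
    have h2 := congrArg Matrix.toBlocks₂₂ h1
    simpa [Matrix.toBlocks_fromBlocks₂₂, Matrix.IsSymm] using h2
  · intro x hx
    have hne : (Sum.elim (0 : κ → ℝ) x) ≠ 0 := by
      intro hcontra
      exact hx (funext fun i => congrFun hcontra (Sum.inr i))
    have h2 := h.dotProduct_mulVec_pos hne
    simpa [Matrix.fromBlocks_mulVec, sumElim_dotProduct_sumElim] using h2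

lemma posDef_block₁₁ {A : Matrix κ κ ℝ} {B : Matrix κ ι ℝ} {C : Matrix ι κ ℝ}
    {Dm : Matrix ι ι ℝ} (h : (Matrix.fromBlocks A B C Dm).PosDef) : A.PosDef := by
  rw [Matrix.posDef_iff_dotProduct_mulVec]
  constructor
  · have h1 := h.1
    rw [Matrix.IsHermitian, Matrix.fromBlocks_conjTranspose] at h1
    have h2 := congrArg Matrix.toBlocks₁₁ h1
    simpa [Matrix.toBlocks_fromBlocks₁₁, Matrix.IsSymm] using h2
  · intro x hx
    have hne : (Sum.elim x (0 : ι → ℝ)) ≠ 0 := by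
      intro hcontra
      exact hx (funext fun i => congrFun hcontra (Sum.inl i))
    have h2 := h.dotProduct_mulVec_pos hne
    simpa [Matrix.fromBlocks_mulVec, sumElim_dotProduct_sumElim] using h2

lemma schur₂₂_posDef {A : Matrix κ κ ℝ} {B : Matrix κ ι ℝ} {Dm : Matrix ι ι ℝ}
    (hD : Dm.PosDef) (h : (Matrix.fromBlocks A B Bᴴ Dm).PosDef) :
    (A - B * Dm⁻¹ * Bᴴ).PosDef := by
  have iD : Invertible Dm := Dm.invertibleOfIsUnitDet (posDef_isUnit_det hD)
  rw [Matrix.posDef_iff_dotProduct_mulVec]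
  constructor
  · have hA : A.IsHermitian := (posDef_block₁₁ h).1
    exact hA.sub (Matrix.isHermitian_mul_mul_conjTranspose B hD.inv.1)
  · intro x hx
    have key := Matrix.schur_complement_eq₂₂ A B x (-((Dm⁻¹ * Bᴴ) *ᵥ x)) hD.1
    have hzero : (Dm⁻¹ * Bᴴ) *ᵥ x + -((Dm⁻¹ * Bᴴ) *ᵥ x) = 0 := by
      simp
    rw [hzero] at key
    have hne : Sum.elim x (-((Dm⁻¹ * Bᴴ) *ᵥ x)) ≠ 0 := by
      intro hcontra
      exact hx (funext fun i => congrFun hcontra (Sum.inl i))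
    have hpos := h.dotProduct_mulVec_pos hne
    rw [Matrix.dotProduct_mulVec, key] at hpos
    simpa [Matrix.dotProduct_mulVec] using hpos

lemma schur₁₁_posDef {A : Matrix κ κ ℝ} {B : Matrix κ ι ℝ} {Dm : Matrix ι ι ℝ}
    (hA : A.PosDef) (h : (Matrix.fromBlocks A B Bᴴ Dm).PosDef) :
    (Dm - Bᴴ * A⁻¹ * B).PosDef := by
  have iA : Invertible A := A.invertibleOfIsUnitDet (posDef_isUnit_det hA)
  rw [Matrix.posDef_iff_dotProduct_mulVec]
  constructor
  · have hD : Dm.IsHermitian := (posDef_block₂₂ h).1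
    exact hD.sub (Matrix.isHermitian_conjTranspose_mul_mul B hA.inv.1)
  · intro x hx
    have key := Matrix.schur_complement_eq₁₁ B Dm (-((A⁻¹ * B) *ᵥ x)) x hA.1
    have hzero : -((A⁻¹ * B) *ᵥ x) + (A⁻¹ * B) *ᵥ x = 0 := by simp
    rw [hzero] at key
    have hne : Sum.elim (-((A⁻¹ * B) *ᵥ x)) x ≠ 0 := by
      intro hcontra
      exact hx (funext fun i => congrFun hcontra (Sum.inr i))
    have hpos := h.dotProduct_mulVec_pos hne
    rw [Matrix.dotProduct_mulVec, key] at hpos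
    simpa [Matrix.dotProduct_mulVec] using hpos

lemma trunc_integral (S : Matrix κ κ ℝ) (γ m : κ → ℝ) :
    (∫ t in {t : κ → ℝ | ∀ i, t i + γ i > 0}, gaussPdf S (t - m)) = gaussCdf S (γ + m) := by
  have hemb : MeasurableEmbedding (fun t : κ → ℝ => m - t) :=
    (MeasurableEquiv.subLeft m).measurableEmbedding
  have hmp : MeasurePreserving (fun t : κ → ℝ => m - t) volume volume :=
    MeasureTheory.Measure.measurePreserving_sub_left volume m
  have h1 := hmp.setIntegral_preimage_emb hemb (fun t => gaussPdf S (t - m))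
      {t : κ → ℝ | ∀ i, t i + γ i > 0}
  rw [← h1]
  have hpre : (fun t : κ → ℝ => m - t) ⁻¹' {t : κ → ℝ | ∀ i, t i + γ i > 0}
      = Set.pi Set.univ (fun i => Set.Iio ((γ + m) i)) := by
    ext u
    simp only [Set.mem_preimage, Set.mem_setOf_eq, Set.mem_pi, Set.mem_univ, Set.mem_Iio,
      Pi.sub_apply, Pi.add_apply, true_implies, gt_iff_lt]
    constructor
    · intro h i; linarith [h i]
    · intro h i; linarith [h i]
  rw [hpre]
  have hint : ∀ u : κ → ℝ, gaussPdf S (m - u - m) = gaussPdf S u := by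
    intro u
    rw [show m - u - m = -u by abel, gauss_even]
  simp only [hint]
  have hae : Set.pi Set.univ (fun i => Set.Iio ((γ + m) i))
      =ᵐ[(volume : Measure (κ → ℝ))] Set.Iic (γ + m) := by
    rw [MeasureTheory.volume_pi]
    exact MeasureTheory.Measure.univ_pi_Iio_ae_eq_Iic
  rw [setIntegral_congr_set hae]
  unfold gaussCdf
  have hset : Set.Iic (γ + m) = {t : κ → ℝ | ∀ i, t i ≤ (γ + m) i} := by
    ext u
    simp [Set.mem_Iic, Pi.le_def]
  rw [hset]

end Aux

/-- additive representation of the unified skew-normal (density form of the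
sampling scheme): the density of `z = ξ + D_Ω (u₀ + Δ Γ⁻¹ u₁)`, with `u₀ ~ N(0, Ω̄ − Δ Γ⁻¹ Δᵀ)`
independent of `u₁ ~ N_s(0, Γ)` truncated componentwise below `−γ`, is the
`SUN_{p,s}(ξ, Ω, Δ, γ, Γ)` density. -/
theorem sun_additive_representation (p s : ℕ) (hp : 1 ≤ p) (hs : 1 ≤ s)
    (ξ : Fin p → ℝ) (Ω : Matrix (Fin p) (Fin p) ℝ) (hΩ : Ω.PosDef)
    (Δ : Matrix (Fin p) (Fin s) ℝ) (γ : Fin s → ℝ)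
    (Γ : Matrix (Fin s) (Fin s) ℝ) (hΓ : Γ.PosDef)
    (hM : (Matrix.fromBlocks Γ Δᵀ Δ (matCorr Ω)).PosDef)
    (hγ : 0 < gaussCdf Γ γ) :
    ∀ z : Fin p → ℝ,
      ((matD Ω).det)⁻¹ *
        ∫ t in {t : Fin s → ℝ | ∀ i, t i + γ i > 0},
          gaussPdf (matCorr Ω - Δ * Γ⁻¹ * Δᵀ)
              ((matD Ω)⁻¹.mulVec (z - ξ) - (Δ * Γ⁻¹).mulVec t) *
            (gaussPdf Γ t / gaussCdf Γ γ) =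
      sunPdf ξ Ω Δ γ Γ z := by
  intro z
  have hΓu := posDef_isUnit_det hΓ
  have hObPD : (matCorr Ω).PosDef := posDef_block₂₂ hM
  have hMh : (Matrix.fromBlocks Γ Δᵀ (Δᵀ)ᴴ (matCorr Ω)).PosDef := by
    simpa [Matrix.conjTranspose_eq_transpose_of_trivial, Matrix.transpose_transpose] using hM
  have hΨPD : (matCorr Ω - Δ * Γ⁻¹ * Δᵀ).PosDef := by
    have h := schur₁₁_posDef hΓ hMh
    simpa [Matrix.conjTranspose_eq_transpose_of_trivial, Matrix.transpose_transpose] using h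
  have hΛPD : (Γ - Δᵀ * (matCorr Ω)⁻¹ * Δ).PosDef := by
    have h := schur₂₂_posDef hObPD hMh
    simpa [Matrix.conjTranspose_eq_transpose_of_trivial, Matrix.transpose_transpose] using h
  have hdiag : ∀ i, 0 < Ω i i := by
    intro i
    have hne : (Pi.single i 1 : Fin p → ℝ) ≠ 0 := by
      intro hc
      have := congrFun hc i
      simp at this
    have h2 := hΩ.dotProduct_mulVec_pos hne
    simpa [Matrix.mulVec_single, single_dotProduct] using h2
  have hDpos : (matD Ω).PosDef := by
    unfold matD
    exact Matrix.posDef_diagonal_iff.mpr fun i => Real.sqrt_pos.mpr (hdiag i)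
  have hDu : IsUnit (matD Ω).det := posDef_isUnit_det hDpos
  have hDt : (matD Ω)ᵀ = matD Ω := Matrix.diagonal_transpose _
  have hDit : ((matD Ω)⁻¹)ᵀ = (matD Ω)⁻¹ := by rw [Matrix.transpose_nonsing_inv, hDt]
  have hfact : Ω = matD Ω * matCorr Ω * matD Ω := by
    unfold matCorr
    rw [Matrix.mul_assoc ((matD Ω)⁻¹) Ω ((matD Ω)⁻¹),
      Matrix.mul_nonsing_inv_cancel_left _ _ hDu,
      Matrix.nonsing_inv_mul_cancel_right _ _ hDu]
  have hdet : Ω.det = (matD Ω).det * (matCorr Ω).det * (matD Ω).det := by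
    conv_lhs => rw [hfact]
    rw [Matrix.det_mul, Matrix.det_mul]
  have hGpdf : gaussPdf Ω (z - ξ)
      = ((matD Ω).det)⁻¹ * gaussPdf (matCorr Ω) ((matD Ω)⁻¹ *ᵥ (z - ξ)) := by
    unfold gaussPdf
    have hquad : (z - ξ) ⬝ᵥ Ω⁻¹ *ᵥ (z - ξ)
        = ((matD Ω)⁻¹ *ᵥ (z - ξ)) ⬝ᵥ (matCorr Ω)⁻¹ *ᵥ ((matD Ω)⁻¹ *ᵥ (z - ξ)) := by
      conv_lhs => rw [hfact]
      rw [Matrix.mul_inv_rev, Matrix.mul_inv_rev]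
      rw [← Matrix.mulVec_mulVec, ← Matrix.mulVec_mulVec, dot_shift, hDit]
    rw [hquad, hdet]
    have hd0 : 0 < (matD Ω).det := hDpos.det_pos
    have hcorr0 : 0 < (matCorr Ω).det := hObPD.det_pos
    have hkey : ((matD Ω).det * (matCorr Ω).det * (matD Ω).det) ^ (-(1:ℝ)/2)
        = ((matD Ω).det)⁻¹ * (matCorr Ω).det ^ (-(1:ℝ)/2) := by
      rw [show (matD Ω).det * (matCorr Ω).det * (matD Ω).det
          = ((matD Ω).det * (matD Ω).det) * (matCorr Ω).det by ring,
        Real.mul_rpow (by positivity) hcorr0.le]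
      congr 1
      rw [show (matD Ω).det * (matD Ω).det = ((matD Ω).det) ^ (2:ℕ) by ring,
        ← Real.rpow_natCast ((matD Ω).det) 2, ← Real.rpow_mul hd0.le]
      norm_num
      exact Real.rpow_neg_one _
    rw [hkey]
    ring
  have hmv : (Δᵀ * (matCorr Ω)⁻¹ * (matD Ω)⁻¹).mulVec (z - ξ)
      = (Δᵀ * (matCorr Ω)⁻¹) *ᵥ ((matD Ω)⁻¹ *ᵥ (z - ξ)) := by
    rw [Matrix.mulVec_mulVec]
  have hrw : ∀ t : Fin s → ℝ,
      gaussPdf (matCorr Ω - Δ * Γ⁻¹ * Δᵀ)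
          ((matD Ω)⁻¹.mulVec (z - ξ) - (Δ * Γ⁻¹).mulVec t) *
        (gaussPdf Γ t / gaussCdf Γ γ)
      = (gaussPdf (matCorr Ω) ((matD Ω)⁻¹ *ᵥ (z - ξ)) / gaussCdf Γ γ) *
        gaussPdf (Γ - Δᵀ * (matCorr Ω)⁻¹ * Δ)
          (t - (Δᵀ * (matCorr Ω)⁻¹) *ᵥ ((matD Ω)⁻¹ *ᵥ (z - ξ))) := by
    intro t
    have h := gauss_factor (matCorr Ω) Δ Γ hObPD hΓ hΨPD hΛPD ((matD Ω)⁻¹ *ᵥ (z - ξ)) t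
    calc gaussPdf (matCorr Ω - Δ * Γ⁻¹ * Δᵀ)
            ((matD Ω)⁻¹.mulVec (z - ξ) - (Δ * Γ⁻¹).mulVec t) * (gaussPdf Γ t / gaussCdf Γ γ)
        = gaussPdf (matCorr Ω - Δ * Γ⁻¹ * Δᵀ)
            ((matD Ω)⁻¹.mulVec (z - ξ) - (Δ * Γ⁻¹).mulVec t) * gaussPdf Γ t / gaussCdf Γ γ := by
          ring
      _ = gaussPdf (matCorr Ω) ((matD Ω)⁻¹ *ᵥ (z - ξ)) *
            gaussPdf (Γ - Δᵀ * (matCorr Ω)⁻¹ * Δ)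
              (t - (Δᵀ * (matCorr Ω)⁻¹) *ᵥ ((matD Ω)⁻¹ *ᵥ (z - ξ))) / gaussCdf Γ γ := by
          rw [h]
      _ = _ := by ring
  simp only [hrw]
  rw [MeasureTheory.integral_const_mul]
  rw [trunc_integral]
  unfold sunPdf
  rw [hGpdf, hmv]
  ring
end

section
/- Univariate case of the probit–Gaussian marginalization identity used for the marginal likelihood: for every w, ξ ∈ ℝ and every σ² > 0, ∫_{ℝ} Φ₁(w f) · (2πσ²)^{-1/2} exp(-(f − ξ)²/(2σ²)) df = Φ₁(w ξ / √(w² σ² + 1)). -/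
open MeasureTheory Real Matrix

noncomputable def phi (t : ℝ) : ℝ := (2 * π) ^ (-(1 : ℝ) / 2) * Real.exp (-(t ^ 2) / 2)

noncomputable def npdf (V u : ℝ) : ℝ :=
  (2 * π * V) ^ (-(1 : ℝ) / 2) * Real.exp (-(u ^ 2 / (2 * V)))

lemma rpow_neg_half {x : ℝ} (hx : 0 ≤ x) : x ^ (-(1 : ℝ) / 2) = (Real.sqrt x)⁻¹ := by
  rw [Real.sqrt_eq_rpow, ← Real.rpow_neg hx]
  norm_num

lemma phi_nonneg (t : ℝ) : 0 ≤ phi t := by unfold phi; positivity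

lemma phi_cont : Continuous phi := by unfold phi; fun_prop

lemma npdf_cont (V : ℝ) : Continuous (npdf V) := by unfold npdf; fun_prop

lemma phi_le (t : ℝ) : phi t ≤ (2 * π) ^ (-(1 : ℝ) / 2) := by
  unfold phi
  nth_rewrite 2 [← mul_one ((2 * π) ^ (-(1 : ℝ) / 2))]
  gcongr
  exact Real.exp_le_one_iff.2 (by nlinarith [sq_nonneg t])

lemma integrable_phi : Integrable phi := by
  have h : Integrable fun t : ℝ => Real.exp (-(1/2) * t ^ 2) :=
    integrable_exp_neg_mul_sq (by norm_num)
  have h2 : ∀ t : ℝ, -(t ^ 2) / 2 = -(1/2) * t ^ 2 := fun t => by ring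
  unfold phi
  simp only [h2]
  exact h.const_mul _

lemma integrable_npdf {V : ℝ} (hV : 0 < V) : Integrable (npdf V) := by
  have h : Integrable fun t : ℝ => Real.exp (-(1/(2*V)) * t ^ 2) :=
    integrable_exp_neg_mul_sq (by positivity)
  have h2 : ∀ t : ℝ, -(t ^ 2 / (2 * V)) = -(1/(2*V)) * t ^ 2 := fun t => by ring
  unfold npdf
  simp only [h2]
  exact h.const_mul _

lemma npdf_nonneg {V : ℝ} (hV : 0 < V) (u : ℝ) : 0 ≤ npdf V u := by unfold npdf; positivity

lemma cdf_shift (a d : ℝ) : stdNormalCdf a = ∫ u in Set.Iic (a - d), phi (u + d) := by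
  have hmp : MeasurePreserving (fun x : ℝ => x + d) volume volume :=
    measurePreserving_add_right volume d
  have hemb : MeasurableEmbedding (fun x : ℝ => x + d) :=
    (Homeomorph.addRight d).measurableEmbedding
  have hpre : (fun x : ℝ => x + d) ⁻¹' Set.Iic a = Set.Iic (a - d) := by
    ext x; simp [Set.mem_Iic, le_sub_iff_add_le]
  have h0 : stdNormalCdf a = ∫ t in Set.Iic a, phi t := rfl
  rw [h0, ← hmp.setIntegral_preimage_emb hemb phi (Set.Iic a), hpre]

lemma npdf_scale {V : ℝ} (hV : 0 < V) (x : ℝ) :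
    npdf V (Real.sqrt V * x) = (Real.sqrt V)⁻¹ * phi x := by
  have h2π : (0:ℝ) < 2 * π := by positivity
  unfold npdf phi
  rw [rpow_neg_half (by positivity), rpow_neg_half h2π.le,
    Real.sqrt_mul h2π.le, mul_pow, Real.sq_sqrt hV.le]
  rw [mul_inv]
  have h : -(V * x ^ 2 / (2 * V)) = -(x ^ 2) / 2 := by field_simp
  rw [h]
  ring

lemma cdf_scale {V : ℝ} (hV : 0 < V) (a : ℝ) :
    ∫ u in Set.Iic a, npdf V u = stdNormalCdf (a / Real.sqrt V) := by
  have hs : (0:ℝ) < Real.sqrt V := Real.sqrt_pos.2 hV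
  have key := MeasureTheory.Measure.integral_comp_mul_left
    (Set.indicator (Set.Iic a) (npdf V)) (Real.sqrt V)
  have hpre : (fun x : ℝ => Real.sqrt V * x) ⁻¹' Set.Iic a = Set.Iic (a / Real.sqrt V) := by
    ext x; simp [Set.mem_Iic, le_div_iff₀ hs, mul_comm]
  have hlhs : (fun x : ℝ => Set.indicator (Set.Iic a) (npdf V) (Real.sqrt V * x)) =
      fun x => (Real.sqrt V)⁻¹ * Set.indicator (Set.Iic (a / Real.sqrt V)) phi x := by
    ext x
    rw [← Set.indicator_comp_right (fun x : ℝ => Real.sqrt V * x), hpre]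
    by_cases hx : x ∈ Set.Iic (a / Real.sqrt V)
    · rw [Set.indicator_of_mem hx, Set.indicator_of_mem hx, Function.comp_apply,
        npdf_scale hV]
    · rw [Set.indicator_of_notMem hx, Set.indicator_of_notMem hx, mul_zero]
  rw [hlhs] at key
  rw [MeasureTheory.integral_const_mul, smul_eq_mul, abs_of_pos (by positivity)] at key
  have h1 : stdNormalCdf (a / Real.sqrt V) = ∫ x, Set.indicator (Set.Iic (a / Real.sqrt V)) phi x := by
    rw [stdNormalCdf, ← MeasureTheory.integral_indicator measurableSet_Iic]; rfl
  have h2 : ∫ u in Set.Iic a, npdf V u = ∫ x, Set.indicator (Set.Iic a) (npdf V) x :=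
    (MeasureTheory.integral_indicator measurableSet_Iic).symm
  rw [h1, h2]
  exact (mul_left_cancel₀ (by positivity : ((Real.sqrt V)⁻¹ : ℝ) ≠ 0) key).symm

lemma conv_gauss {w σ2 : ℝ} (hσ : 0 < σ2) (ξ u : ℝ) :
    ∫ f : ℝ, phi (u + w * (f - ξ)) * npdf σ2 (f - ξ) = npdf (w ^ 2 * σ2 + 1) u := by
  have hV : 0 < w ^ 2 * σ2 + 1 := by positivity
  have hA : 0 < w ^ 2 + σ2⁻¹ := by positivity
  set V := w ^ 2 * σ2 + 1 with hVdef
  set A := w ^ 2 + σ2⁻¹ with hAdef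
  have step1 : ∫ f : ℝ, phi (u + w * (f - ξ)) * npdf σ2 (f - ξ)
      = ∫ s : ℝ, phi (u + w * s) * npdf σ2 s :=
    integral_sub_right_eq_self (fun s => phi (u + w * s) * npdf σ2 s) ξ
  rw [step1]
  have expand : ∀ s : ℝ, phi (u + w * s) * npdf σ2 s
      = ((2 * π) ^ (-(1:ℝ)/2) * (2 * π * σ2) ^ (-(1:ℝ)/2) * Real.exp (-(u ^ 2 / (2 * V))))
        * Real.exp (-(A/2) * (s + u * w / A) ^ 2) := by
    intro s
    unfold phi npdf
    have hmul : ∀ a b c d : ℝ, (a * Real.exp b) * (c * Real.exp d) = (a * c) * Real.exp (b + d) :=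
      fun a b c d => by rw [Real.exp_add]; ring
    rw [hmul, mul_assoc ((2 * π) ^ (-(1:ℝ)/2) * (2 * π * σ2) ^ (-(1:ℝ)/2)) (Real.exp _) (Real.exp _),
      ← Real.exp_add]
    congr 1
    congr 1
    have hAne : A ≠ 0 := hA.ne'
    have hVne : V ≠ 0 := hV.ne'
    have hσne : σ2 ≠ 0 := hσ.ne'
    simp only [hVdef, hAdef]
    field_simp
    ring
  simp only [expand]
  rw [MeasureTheory.integral_const_mul]
  have shift : ∫ s : ℝ, Real.exp (-(A/2) * (s + u * w / A) ^ 2)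
      = ∫ x : ℝ, Real.exp (-(A/2) * x ^ 2) :=
    integral_add_right_eq_self (fun x => Real.exp (-(A/2) * x ^ 2)) (u * w / A)
  rw [shift, integral_gaussian (A/2)]
  have hπA : π / (A/2) = 2 * π * σ2 / V := by
    rw [hVdef, hAdef]; field_simp
  rw [hπA, Real.sqrt_div (by positivity) V, npdf]
  rw [rpow_neg_half (by positivity), rpow_neg_half (by positivity), rpow_neg_half (by positivity)]
  rw [Real.sqrt_mul (by positivity : (0:ℝ) ≤ 2 * π) V]
  have h1 : Real.sqrt (2 * π) ≠ 0 := by positivity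
  have h2 : Real.sqrt (2 * π * σ2) ≠ 0 := by positivity
  have h3 : Real.sqrt V ≠ 0 := by positivity
  field_simp


/-- univariate case of the probit–Gaussian marginalization identity:
`∫ Φ₁(w f) (2πσ²)^{-1/2} exp(−(f − ξ)²/(2σ²)) df = Φ₁(w ξ / √(w² σ² + 1))`. -/
theorem probit_gaussian_marginal_univariate (w ξ σ2 : ℝ) (hσ : 0 < σ2) :
    ∫ f : ℝ,
        stdNormalCdf (w * f) *
          ((2 * π * σ2) ^ (-(1 : ℝ) / 2) * Real.exp (-((f - ξ) ^ 2 / (2 * σ2)))) =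
      stdNormalCdf (w * ξ / Real.sqrt (w ^ 2 * σ2 + 1)) := by
  have hV : 0 < w ^ 2 * σ2 + 1 := by positivity
  have hφc : Continuous phi := phi_cont
  have hnc : Continuous (npdf σ2) := npdf_cont σ2
  have hg_int : Integrable (fun f : ℝ => npdf σ2 (f - ξ)) :=
    (integrable_npdf hσ).comp_sub_right ξ
  have hid : (∫ f : ℝ, stdNormalCdf (w * f) *
      ((2 * π * σ2) ^ (-(1 : ℝ) / 2) * Real.exp (-((f - ξ) ^ 2 / (2 * σ2)))))
      = ∫ f : ℝ, stdNormalCdf (w * f) * npdf σ2 (f - ξ) := rfl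
  rw [hid]
  have hstep1 : ∀ f : ℝ, stdNormalCdf (w * f) * npdf σ2 (f - ξ)
      = ∫ u in Set.Iic (w * ξ), phi (u + w * (f - ξ)) * npdf σ2 (f - ξ) := by
    intro f
    have h1 := cdf_shift (w * f) (w * (f - ξ))
    have h2 : w * f - w * (f - ξ) = w * ξ := by ring
    rw [h2] at h1
    rw [h1, ← MeasureTheory.integral_mul_const]
  simp only [hstep1]
  have hcont2 : Continuous fun p : ℝ × ℝ => phi (p.2 + w * (p.1 - ξ)) * npdf σ2 (p.1 - ξ) := by
    apply Continuous.mul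
    · exact hφc.comp (by fun_prop)
    · exact hnc.comp (by fun_prop)
  have hFm : Measurable (Function.uncurry fun f u : ℝ =>
      ENNReal.ofReal (phi (u + w * (f - ξ)) * npdf σ2 (f - ξ))) :=
    ENNReal.measurable_ofReal.comp hcont2.measurable
  have hnn : ∀ f u : ℝ, 0 ≤ phi (u + w * (f - ξ)) * npdf σ2 (f - ξ) :=
    fun f u => mul_nonneg (phi_nonneg _) (npdf_nonneg hσ _)
  have ha : ∀ f : ℝ, (∫ u in Set.Iic (w * ξ), phi (u + w * (f - ξ)) * npdf σ2 (f - ξ))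
      = (∫⁻ u in Set.Iic (w * ξ),
          ENNReal.ofReal (phi (u + w * (f - ξ)) * npdf σ2 (f - ξ))).toReal := by
    intro f
    exact MeasureTheory.integral_eq_lintegral_of_nonneg_ae
      (MeasureTheory.ae_of_all _ fun u => hnn f u)
      ((Continuous.mul (hφc.comp (by fun_prop)) continuous_const).aestronglyMeasurable)
  simp only [ha]
  have hLm : Measurable fun f : ℝ => ∫⁻ u in Set.Iic (w * ξ),
      ENNReal.ofReal (phi (u + w * (f - ξ)) * npdf σ2 (f - ξ)) :=
    Measurable.lintegral_prod_right hFm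
  have hphiu_int : ∀ d : ℝ, Integrable fun u : ℝ => phi (u + d) :=
    fun d => integrable_phi.comp_add_right d
  have hLlt : ∀ f : ℝ, (∫⁻ u in Set.Iic (w * ξ),
      ENNReal.ofReal (phi (u + w * (f - ξ)) * npdf σ2 (f - ξ))) ≠ ⊤ := by
    intro f
    have hle := MeasureTheory.setLIntegral_le_lintegral (μ := volume) (Set.Iic (w * ξ))
      (fun u => ENNReal.ofReal (phi (u + w * (f - ξ)) * npdf σ2 (f - ξ)))
    have hInt : Integrable fun u : ℝ => phi (u + w * (f - ξ)) * npdf σ2 (f - ξ) :=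
      (hphiu_int (w * (f - ξ))).mul_const _
    have heq : (∫⁻ u, ENNReal.ofReal (phi (u + w * (f - ξ)) * npdf σ2 (f - ξ)))
        = ENNReal.ofReal (∫ u, phi (u + w * (f - ξ)) * npdf σ2 (f - ξ)) :=
      (MeasureTheory.ofReal_integral_eq_lintegral_ofReal hInt
        (MeasureTheory.ae_of_all _ fun u => hnn f u)).symm
    exact (lt_of_le_of_lt hle (heq ▸ ENNReal.ofReal_lt_top)).ne
  rw [MeasureTheory.integral_eq_lintegral_of_nonneg_ae
    (MeasureTheory.ae_of_all _ fun f => ENNReal.toReal_nonneg)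
    hLm.ennreal_toReal.aestronglyMeasurable]
  have hofto : ∀ f : ℝ, ENNReal.ofReal ((∫⁻ u in Set.Iic (w * ξ),
      ENNReal.ofReal (phi (u + w * (f - ξ)) * npdf σ2 (f - ξ))).toReal)
      = ∫⁻ u in Set.Iic (w * ξ), ENNReal.ofReal (phi (u + w * (f - ξ)) * npdf σ2 (f - ξ)) :=
    fun f => ENNReal.ofReal_toReal (hLlt f)
  simp only [hofto]
  rw [MeasureTheory.lintegral_lintegral_swap hFm.aemeasurable]
  have hd : ∀ u : ℝ, (∫⁻ f, ENNReal.ofReal (phi (u + w * (f - ξ)) * npdf σ2 (f - ξ)))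
      = ENNReal.ofReal (npdf (w ^ 2 * σ2 + 1) u) := by
    intro u
    have hbdd : Integrable fun f : ℝ => phi (u + w * (f - ξ)) * npdf σ2 (f - ξ) := by
      refine hg_int.bdd_mul (c := (2 * π) ^ (-(1:ℝ)/2)) ?_ (MeasureTheory.ae_of_all _ fun f => ?_)
      · exact (hφc.comp (by fun_prop)).aestronglyMeasurable
      · rw [Real.norm_eq_abs, abs_of_nonneg (phi_nonneg _)]; exact phi_le _
    rw [← MeasureTheory.ofReal_integral_eq_lintegral_ofReal hbdd
      (MeasureTheory.ae_of_all _ fun f => hnn f u)]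
    rw [conv_gauss hσ ξ u]
  simp only [hd]
  have he : (∫⁻ u in Set.Iic (w * ξ), ENNReal.ofReal (npdf (w ^ 2 * σ2 + 1) u))
      = ENNReal.ofReal (∫ u in Set.Iic (w * ξ), npdf (w ^ 2 * σ2 + 1) u) :=
    (MeasureTheory.ofReal_integral_eq_lintegral_ofReal ((integrable_npdf hV).restrict)
      (MeasureTheory.ae_of_all _ fun u => npdf_nonneg hV u)).symm
  rw [he, ENNReal.toReal_ofReal
    (MeasureTheory.integral_nonneg fun u => npdf_nonneg hV u)]
  exact cdf_scale hV (w * ξ)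
end
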